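/- arXiv:1510.01524 — 8 statements merged into one kernel-verified Lean document; each statement's English description precedes it below -/
import Mathlib

section
/- The pseudo-hyperbolic metric ρ_E(x,y) = ‖φ_x(y)‖ on the unit ball of a complex Hilbert space satisfies the sharpened triangle inequality ρ_E(x,y) ≤ (ρ_E(x,u) + ρ_E(u,y))/(1 + ρ_E(x,u)·ρ_E(u,y)) for all x, u, y in the open unit ball. -/
open scoped ComplexInnerProductSpace Classical

/-- The Möbius transform `φ_a` of the unit ball of a complex Hilbert space. -/
noncomputable def mobius {E : Type*} [NormedAddCommGroup E] [InnerProductSpace ℂ E]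
    (a x : E) : E :=
  if a = 0 then -x
  else
    let m : E := ((1 : ℂ) - ⟪a, x⟫)⁻¹ • (a - x)
    let Pm : E := (⟪a, m⟫ / (‖a‖ ^ 2 : ℂ)) • a
    (Real.sqrt (1 - ‖a‖ ^ 2) : ℂ) • (m - Pm) + Pm

/-- The pseudo-hyperbolic metric `ρ_E(x,y) = ‖φ_x(y)‖` on the unit ball. -/
noncomputable def rhoE {E : Type*} [NormedAddCommGroup E] [InnerProductSpace ℂ E]
    (x y : E) : ℝ := ‖mobius x y‖

lemma one_sub_inner_ne_zero {E : Type*} [NormedAddCommGroup E] [InnerProductSpace ℂ E]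
    {a x : E} (ha : ‖a‖ < 1) (hx : ‖x‖ < 1) : (1:ℂ) - ⟪a, x⟫ ≠ 0 := by
  have hw1 : ‖⟪a, x⟫‖ < 1 := by
    calc ‖⟪a, x⟫‖ ≤ ‖a‖ * ‖x‖ := norm_inner_le_norm a x
    _ < 1 := by nlinarith [norm_nonneg x, norm_nonneg a]
  intro h
  have : (1:ℂ) = ⟪a, x⟫ := by linear_combination h
  rw [← this] at hw1
  simp at hw1

lemma mobius_normSq {E : Type*} [NormedAddCommGroup E] [InnerProductSpace ℂ E]
    (a x : E) (ha : ‖a‖ < 1) (hx : ‖x‖ < 1) :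
    ‖mobius a x‖ ^ 2 * ‖(1:ℂ) - ⟪a, x⟫‖ ^ 2
      = ‖(1:ℂ) - ⟪a, x⟫‖ ^ 2 - (1 - ‖a‖ ^ 2) * (1 - ‖x‖ ^ 2) := by
  by_cases h0 : a = 0
  · simp [mobius, h0]
  · have hna : (0:ℝ) < ‖a‖ := norm_pos_iff.mpr h0
    have hta : (‖a‖^2 : ℝ) ≠ 0 := by positivity
    set w : ℂ := ⟪a, x⟫ with hwdef
    have h1w : (1:ℂ) - w ≠ 0 := one_sub_inner_ne_zero ha hx
    have hN : ‖(1:ℂ) - w‖ ≠ 0 := norm_ne_zero_iff.mpr h1w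
    set c : ℂ := ((1:ℂ) - w)⁻¹ with hcdef
    set m : E := c • (a - x) with hmdef
    set Pm : E := (⟪a, m⟫ / (‖a‖ ^ 2 : ℂ)) • a with hPmdef
    have hmob : mobius a x = (Real.sqrt (1 - ‖a‖ ^ 2) : ℂ) • (m - Pm) + Pm := by
      rw [mobius, if_neg h0]
    have ham : ⟪a, m⟫ = c * ((‖a‖^2 : ℂ) - w) := by
      simp [hmdef, inner_smul_right, inner_sub_right, inner_self_eq_norm_sq_to_K]
      exact Or.inl hwdef.symm
    have hca : ((‖a‖:ℂ)^2) ≠ 0 :=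
      pow_ne_zero 2 (Complex.ofReal_ne_zero.mpr hna.ne')
    have hperp : ⟪m - Pm, Pm⟫ = 0 := by
      have h2 : ⟪m, a⟫ = starRingEnd ℂ ⟪a, m⟫ := (inner_conj_symm m a).symm
      simp only [hPmdef, inner_sub_left, inner_smul_left, inner_smul_right,
        inner_self_eq_norm_sq_to_K, map_div₀, Complex.conj_ofReal, h2]
      field_simp
      rw [map_pow, Complex.conj_ofReal]
      simp [hca]
    have hperp' : ⟪(Real.sqrt (1 - ‖a‖ ^ 2) : ℂ) • (m - Pm), Pm⟫ = 0 := by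
      rw [inner_smul_left, hperp, mul_zero]
    have hs : (Real.sqrt (1 - ‖a‖ ^ 2))^2 = 1 - ‖a‖^2 :=
      Real.sq_sqrt (by nlinarith [norm_nonneg a])
    have hnorm : ‖mobius a x‖^2 = (1 - ‖a‖^2) * ‖m - Pm‖^2 + ‖Pm‖^2 := by
      have h10 := norm_add_sq_eq_norm_sq_add_norm_sq_of_inner_eq_zero _ _ hperp'
      have h11 : ‖(Real.sqrt (1 - ‖a‖ ^ 2) : ℂ) • (m - Pm)‖^2
          = (1 - ‖a‖^2) * ‖m - Pm‖^2 := by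
        rw [norm_smul, Complex.norm_real, Real.norm_eq_abs,
          abs_of_nonneg (Real.sqrt_nonneg _), mul_pow, hs]
      rw [hmob]
      calc ‖(Real.sqrt (1 - ‖a‖ ^ 2) : ℂ) • (m - Pm) + Pm‖^2
          = ‖(Real.sqrt (1 - ‖a‖ ^ 2) : ℂ) • (m - Pm)‖^2 + ‖Pm‖^2 := by
            rw [← pow_two, ← pow_two, ← pow_two] at h10; exact h10
        _ = (1 - ‖a‖^2) * ‖m - Pm‖^2 + ‖Pm‖^2 := by rw [h11]
    have hPy : ‖m - Pm‖^2 = ‖m‖^2 - ‖Pm‖^2 := by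
      have h3 := @norm_sub_sq ℂ _ _ _ _ m Pm
      have h4 : ⟪m, Pm⟫ = ⟪Pm, Pm⟫ := by
        have h5 : ⟪m, Pm⟫ - ⟪Pm, Pm⟫ = 0 := by rw [← inner_sub_left]; exact hperp
        linear_combination h5
      rw [h4, inner_self_eq_norm_sq] at h3
      linarith
    have hm2 : ‖m‖^2 * ‖(1:ℂ) - w‖^2 = ‖a‖^2 - 2*w.re + ‖x‖^2 := by
      have h5 : ‖m‖ = ‖(1:ℂ) - w‖⁻¹ * ‖a - x‖ := by
        rw [hmdef, norm_smul, hcdef, norm_inv]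
      have h6 : ‖a - x‖^2 = ‖a‖^2 - 2*w.re + ‖x‖^2 := by
        have := @norm_sub_sq ℂ _ _ _ _ a x
        simpa using this
      calc ‖m‖^2 * ‖(1:ℂ) - w‖^2 = ‖a - x‖^2 * (‖(1:ℂ) - w‖⁻¹ * ‖(1:ℂ) - w‖)^2 := by
            rw [h5]; ring
        _ = ‖a‖^2 - 2*w.re + ‖x‖^2 := by rw [inv_mul_cancel₀ hN]; rw [h6]; ring
    have hPm2 : ‖Pm‖^2 * ‖(1:ℂ) - w‖^2 * ‖a‖^2 = (‖a‖^2 - w.re)^2 + w.im^2 := by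
      have h7 : ‖Pm‖ * ‖a‖ = ‖⟪a, m⟫‖ := by
        rw [hPmdef, norm_smul, norm_div, norm_pow, Complex.norm_real, Real.norm_eq_abs,
          abs_of_nonneg (norm_nonneg a)]
        field_simp
      have h9 : ‖(‖a‖:ℂ)^2 - w‖^2 = (‖a‖^2 - w.re)^2 + w.im^2 := by
        rw [Complex.sq_norm, Complex.normSq_apply]
        simp [Complex.sub_re, Complex.sub_im, ← Complex.ofReal_pow]
        ring
      have h8 : ‖⟪a, m⟫‖^2 * ‖(1:ℂ) - w‖^2 = (‖a‖^2 - w.re)^2 + w.im^2 := by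
        rw [ham, norm_mul, hcdef, norm_inv, ← h9]
        calc (‖(1:ℂ) - w‖⁻¹ * ‖(‖a‖:ℂ)^2 - w‖)^2 * ‖(1:ℂ) - w‖^2
            = ‖(‖a‖:ℂ)^2 - w‖^2 * (‖(1:ℂ) - w‖⁻¹ * ‖(1:ℂ) - w‖)^2 := by ring
          _ = ‖(‖a‖:ℂ)^2 - w‖^2 := by rw [inv_mul_cancel₀ hN]; ring
      calc ‖Pm‖^2 * ‖(1:ℂ) - w‖^2 * ‖a‖^2 = (‖Pm‖*‖a‖)^2 * ‖(1:ℂ) - w‖^2 := by ring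
        _ = (‖a‖^2 - w.re)^2 + w.im^2 := by rw [h7, h8]
    have e2 : ‖(1:ℂ) - w‖^2 = (1 - w.re)^2 + w.im^2 := by
      rw [Complex.sq_norm, Complex.normSq_apply]
      simp [Complex.sub_re, Complex.sub_im]
      ring
    have main : (‖mobius a x‖ ^ 2 * ‖(1:ℂ) - w‖ ^ 2) * ‖a‖^2
        = (‖(1:ℂ) - w‖ ^ 2 - (1 - ‖a‖ ^ 2) * (1 - ‖x‖ ^ 2)) * ‖a‖^2 := by
      rw [hnorm, hPy]
      linear_combination ((1 - ‖a‖^2) * ‖a‖^2) * hm2 + (‖a‖^2) * hPm2 + (-(‖a‖^2)) * e2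
    exact mul_right_cancel₀ hta main

lemma key_cs {E : Type*} [NormedAddCommGroup E] [InnerProductSpace ℂ E]
    (u v w : E) (hu : ‖u‖ ≤ 1) :
    ‖((1 - ‖u‖^2 : ℝ) : ℂ) * ⟪v, w⟫ + ⟪v, u⟫ * ⟪u, w⟫‖
      ≤ Real.sqrt ((1 - ‖u‖^2) * ‖v‖^2 + ‖⟪u, v⟫‖^2)
        * Real.sqrt ((1 - ‖u‖^2) * ‖w‖^2 + ‖⟪u, w⟫‖^2) := by
  have hc : (0:ℝ) ≤ 1 - ‖u‖^2 := by nlinarith [norm_nonneg u]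
  set s : ℝ := Real.sqrt (1 - ‖u‖^2) with hsdef
  have hs2 : s^2 = 1 - ‖u‖^2 := Real.sq_sqrt hc
  set V : WithLp 2 (E × ℂ) := (WithLp.equiv 2 (E × ℂ)).symm ((s:ℂ) • v, ⟪u, v⟫) with hV
  set W : WithLp 2 (E × ℂ) := (WithLp.equiv 2 (E × ℂ)).symm ((s:ℂ) • w, ⟪u, w⟫) with hW
  have hinner : ⟪V, W⟫ = ((1 - ‖u‖^2 : ℝ) : ℂ) * ⟪v, w⟫ + ⟪v, u⟫ * ⟪u, w⟫ := by
    rw [WithLp.prod_inner_apply]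
    simp only [hV, hW, WithLp.equiv_symm_apply, WithLp.ofLp_toLp, WithLp.toLp_fst, WithLp.toLp_snd]
    rw [inner_smul_left, inner_smul_right, RCLike.inner_apply, ← inner_conj_symm v u]
    rw [Complex.conj_ofReal]
    push_cast [← hs2]
    ring
  have hnV : ‖V‖^2 = (1 - ‖u‖^2) * ‖v‖^2 + ‖⟪u, v⟫‖^2 := by
    rw [WithLp.prod_norm_sq_eq_of_L2]
    simp only [hV, WithLp.equiv_symm_apply, WithLp.ofLp_toLp, WithLp.toLp_fst, WithLp.toLp_snd]
    rw [norm_smul, Complex.norm_real, Real.norm_eq_abs, abs_of_nonneg (Real.sqrt_nonneg _),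
      mul_pow, hs2]
  have hnW : ‖W‖^2 = (1 - ‖u‖^2) * ‖w‖^2 + ‖⟪u, w⟫‖^2 := by
    rw [WithLp.prod_norm_sq_eq_of_L2]
    simp only [hW, WithLp.equiv_symm_apply, WithLp.ofLp_toLp, WithLp.toLp_fst, WithLp.toLp_snd]
    rw [norm_smul, Complex.norm_real, Real.norm_eq_abs, abs_of_nonneg (Real.sqrt_nonneg _),
      mul_pow, hs2]
  have hcs := norm_inner_le_norm (𝕜 := ℂ) V W
  rw [hinner] at hcs
  rw [← hnV, ← hnW, Real.sqrt_sq (norm_nonneg V), Real.sqrt_sq (norm_nonneg W)]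
  exact hcs

set_option maxHeartbeats 1000000 in
/-- Sharpened triangle inequality for the pseudo-hyperbolic metric:
`ρ_E(x,y) ≤ (ρ_E(x,u) + ρ_E(u,y))/(1 + ρ_E(x,u)ρ_E(u,y))`. -/
theorem rhoE_triangle {E : Type*} [NormedAddCommGroup E] [InnerProductSpace ℂ E]
    (x u y : E) (hx : ‖x‖ < 1) (hu : ‖u‖ < 1) (hy : ‖y‖ < 1) :
    rhoE x y ≤ (rhoE x u + rhoE u y) / (1 + rhoE x u * rhoE u y) := by
  have ha0 : (0:ℝ) ≤ rhoE x u := norm_nonneg _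
  have hb0 : (0:ℝ) ≤ rhoE u y := norm_nonneg _
  have hc0 : (0:ℝ) ≤ rhoE x y := norm_nonneg _
  set a : ℝ := rhoE x u with hadef
  set b : ℝ := rhoE u y with hbdef
  set cc : ℝ := rhoE x y with hccdef
  set Na : ℝ := ‖(1:ℂ) - ⟪x, u⟫‖ with hNadef
  set Nb : ℝ := ‖(1:ℂ) - ⟪u, y⟫‖ with hNbdef
  set Nc : ℝ := ‖(1:ℂ) - ⟪x, y⟫‖ with hNcdef
  have hNa : 0 < Na := norm_pos_iff.mpr (one_sub_inner_ne_zero hx hu)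
  have hNb : 0 < Nb := norm_pos_iff.mpr (one_sub_inner_ne_zero hu hy)
  have hNc : 0 < Nc := norm_pos_iff.mpr (one_sub_inner_ne_zero hx hy)
  have hDx : (0:ℝ) < 1 - ‖x‖^2 := by nlinarith [norm_nonneg x]
  have hDu : (0:ℝ) < 1 - ‖u‖^2 := by nlinarith [norm_nonneg u]
  have hDy : (0:ℝ) < 1 - ‖y‖^2 := by nlinarith [norm_nonneg y]
  have P2 : a^2 * Na^2 = Na^2 - (1 - ‖x‖^2) * (1 - ‖u‖^2) := mobius_normSq x u hx hu
  have P3 : b^2 * Nb^2 = Nb^2 - (1 - ‖u‖^2) * (1 - ‖y‖^2) := mobius_normSq u y hu hy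
  have P1 : cc^2 * Nc^2 = Nc^2 - (1 - ‖x‖^2) * (1 - ‖y‖^2) := mobius_normSq x y hx hy
  -- the two "radicand" identities
  have hS1 : (1 - ‖u‖^2) * ‖x - u‖^2 + ‖⟪u, x - u⟫‖^2 = (a * Na)^2 := by
    have e1 : ‖x - u‖^2 = ‖x‖^2 - 2*(⟪x, u⟫).re + ‖u‖^2 := by
      have := @norm_sub_sq ℂ _ _ _ _ x u
      simpa using this
    have e2 : ‖⟪u, x - u⟫‖^2 = ((⟪x, u⟫).re - ‖u‖^2)^2 + (⟪x, u⟫).im^2 := by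
      have h1 : ⟪u, x - u⟫ = starRingEnd ℂ ⟪x, u⟫ - ((‖u‖^2 : ℝ) : ℂ) := by
        rw [inner_sub_right, ← inner_conj_symm x u, inner_self_eq_norm_sq_to_K,
          Complex.conj_conj]
        norm_cast
      rw [h1, Complex.sq_norm, Complex.normSq_apply]
      simp [Complex.sub_re, Complex.sub_im, Complex.conj_re, Complex.conj_im,
        ← Complex.ofReal_pow]
      rw [show (⟪u,x⟫ : ℂ).re = (⟪x,u⟫ : ℂ).re by rw [← inner_conj_symm x u, Complex.conj_re],
        show (⟪u,x⟫ : ℂ).im = -(⟪x,u⟫ : ℂ).im by rw [← inner_conj_symm x u, Complex.conj_im, neg_neg]]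
      ring
    have e3 : Na^2 = (1 - (⟪x, u⟫).re)^2 + (⟪x, u⟫).im^2 := by
      rw [hNadef, Complex.sq_norm, Complex.normSq_apply]
      simp [Complex.sub_re, Complex.sub_im]
      ring
    have : (a * Na)^2 = Na^2 - (1 - ‖x‖^2) * (1 - ‖u‖^2) := by
      rw [mul_pow]; exact P2
    rw [this]
    linear_combination (1 - ‖u‖^2) * e1 + e2 - e3
  have hS2 : (1 - ‖u‖^2) * ‖y - u‖^2 + ‖⟪u, y - u⟫‖^2 = (b * Nb)^2 := by
    have e1 : ‖y - u‖^2 = ‖y‖^2 - 2*(⟪u, y⟫).re + ‖u‖^2 := by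
      have h0 := @norm_sub_sq ℂ _ _ _ _ y u
      have h1 : (⟪y, u⟫).re = (⟪u, y⟫).re := by
        rw [← inner_conj_symm y u, Complex.conj_re]
      simpa [h1] using h0
    have e2 : ‖⟪u, y - u⟫‖^2 = ((⟪u, y⟫).re - ‖u‖^2)^2 + (⟪u, y⟫).im^2 := by
      have h1 : ⟪u, y - u⟫ = ⟪u, y⟫ - ((‖u‖^2 : ℝ) : ℂ) := by
        rw [inner_sub_right, inner_self_eq_norm_sq_to_K]
        norm_cast
      rw [h1, Complex.sq_norm, Complex.normSq_apply]
      simp [Complex.sub_re, Complex.sub_im, ← Complex.ofReal_pow]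
      ring
    have e3 : Nb^2 = (1 - (⟪u, y⟫).re)^2 + (⟪u, y⟫).im^2 := by
      rw [hNbdef, Complex.sq_norm, Complex.normSq_apply]
      simp [Complex.sub_re, Complex.sub_im]
      ring
    have : (b * Nb)^2 = Nb^2 - (1 - ‖u‖^2) * (1 - ‖y‖^2) := by
      rw [mul_pow]; exact P3
    rw [this]
    linear_combination (1 - ‖u‖^2) * e1 + e2 - e3
  -- key inequality F4
  have F4 : (1 - ‖u‖^2) * Nc ≤ Na * Nb + (a * Na) * (b * Nb) := by
    have hE0 : ((1 - ‖u‖^2 : ℝ) : ℂ) * ((1:ℂ) - ⟪x, y⟫)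
        = ((1:ℂ) - ⟪x, u⟫) * ((1:ℂ) - ⟪u, y⟫)
          - (((1 - ‖u‖^2 : ℝ) : ℂ) * ⟪x - u, y - u⟫ + ⟪x - u, u⟫ * ⟪u, y - u⟫) := by
      have huu : ⟪u, u⟫ = ((‖u‖^2 : ℝ) : ℂ) := by
        rw [inner_self_eq_norm_sq_to_K]; norm_cast
      simp only [inner_sub_left, inner_sub_right, huu]
      push_cast
      ring
    have h1 : (1 - ‖u‖^2) * Nc = ‖((1 - ‖u‖^2 : ℝ) : ℂ) * ((1:ℂ) - ⟪x, y⟫)‖ := by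
      rw [norm_mul, Complex.norm_real, Real.norm_eq_abs, abs_of_nonneg hDu.le]
    have h2 := key_cs u (x - u) (y - u) hu.le
    rw [hS1, hS2, Real.sqrt_sq (by positivity), Real.sqrt_sq (by positivity)] at h2
    calc (1 - ‖u‖^2) * Nc
        = ‖((1:ℂ) - ⟪x, u⟫) * ((1:ℂ) - ⟪u, y⟫)
          - (((1 - ‖u‖^2 : ℝ) : ℂ) * ⟪x - u, y - u⟫ + ⟪x - u, u⟫ * ⟪u, y - u⟫)‖ := by
          rw [h1, hE0]
      _ ≤ ‖((1:ℂ) - ⟪x, u⟫) * ((1:ℂ) - ⟪u, y⟫)‖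
          + ‖((1 - ‖u‖^2 : ℝ) : ℂ) * ⟪x - u, y - u⟫ + ⟪x - u, u⟫ * ⟪u, y - u⟫‖ :=
          norm_sub_le _ _
      _ ≤ Na * Nb + (a * Na) * (b * Nb) := by
          rw [norm_mul]
          exact add_le_add le_rfl h2
  -- final algebra
  have hab : (0:ℝ) < 1 + a * b := by
    have := mul_nonneg ha0 hb0
    linarith
  rw [le_div_iff₀ hab]
  have hsq4 : ((1 - ‖u‖^2) * Nc)^2 ≤ (Na * Nb * (1 + a * b))^2 := by
    have h := mul_self_le_mul_self (by positivity) F4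
    calc ((1 - ‖u‖^2) * Nc)^2 = ((1 - ‖u‖^2) * Nc) * ((1 - ‖u‖^2) * Nc) := sq _
      _ ≤ (Na * Nb + (a * Na) * (b * Nb)) * (Na * Nb + (a * Na) * (b * Nb)) := h
      _ = (Na * Nb * (1 + a * b))^2 := by ring
  have hE : (a + b)^2 * (Nc^2 * Na^2 * Nb^2) - (cc * (1 + a * b))^2 * (Nc^2 * Na^2 * Nb^2)
      = (1 - ‖x‖^2) * (1 - ‖y‖^2)
        * ((1 + a * b)^2 * Na^2 * Nb^2 - (1 - ‖u‖^2)^2 * Nc^2) := by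
    linear_combination (-(1 + a * b)^2 * Na^2 * Nb^2) * P1
      + (Nc^2 * (1 - b^2) * Nb^2) * P2 + (Nc^2 * (1 - ‖x‖^2) * (1 - ‖u‖^2)) * P3
  have h6 : 0 ≤ ((1 - ‖x‖^2) * (1 - ‖y‖^2))
      * ((1 + a * b)^2 * Na^2 * Nb^2 - (1 - ‖u‖^2)^2 * Nc^2) := by
    apply mul_nonneg (mul_nonneg hDx.le hDy.le)
    linarith [hsq4]
  have hfin : (cc * (1 + a * b))^2 * (Nc^2 * Na^2 * Nb^2)
      ≤ (a + b)^2 * (Nc^2 * Na^2 * Nb^2) := by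
    linarith [hE, h6]
  have hcancel : (cc * (1 + a * b))^2 ≤ (a + b)^2 := by
    have hpos : (0:ℝ) < Nc^2 * Na^2 * Nb^2 := by positivity
    exact le_of_mul_le_mul_right hfin hpos
  exact (pow_le_pow_iff_left₀ (mul_nonneg hc0 hab.le) (add_nonneg ha0 hb0)
    two_ne_zero).mp hcancel
end

section
/- Let φ: B_E → B_E be an analytic map on the open unit ball of a complex Hilbert space, and let Rφ(y) = φ'(y)(y) denote the radial derivative. Then for every y ∈ B_E one has |⟨Rφ(y), φ(y)⟩| ≤ ‖y‖·‖φ(y)‖·(1 − ‖φ(y)‖²)/(1 − ‖y‖²). -/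
open scoped ComplexInnerProductSpace

private lemma mobius_normSq_s3 (a z : ℂ) :
    Complex.normSq (1 + (starRingEnd ℂ) a * z) - Complex.normSq (z + a)
      = (1 - Complex.normSq a) * (1 - Complex.normSq z) := by
  simp only [Complex.normSq_apply, Complex.add_re, Complex.add_im, Complex.mul_re,
    Complex.mul_im, Complex.conj_re, Complex.conj_im, Complex.one_re, Complex.one_im]
  ring

private lemma mobius_denom_ne {a z : ℂ} (ha : ‖a‖ < 1) (hz : ‖z‖ < 1) :
    1 + (starRingEnd ℂ) a * z ≠ 0 := by
  intro h
  have hw : (starRingEnd ℂ) a * z = -1 := by linear_combination h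
  have : ‖(starRingEnd ℂ) a * z‖ = 1 := by rw [hw]; simp
  rw [norm_mul, Complex.norm_conj] at this
  nlinarith [norm_nonneg a, norm_nonneg z]

private lemma mobius_mapsTo {a : ℂ} (ha : ‖a‖ < 1) :
    Set.MapsTo (fun z => (z + a) / (1 + (starRingEnd ℂ) a * z))
      (Metric.ball 0 1) (Metric.ball 0 1) := by
  intro z hz
  rw [Metric.mem_ball, dist_zero_right] at *
  have hne := mobius_denom_ne ha hz
  have hA : Complex.normSq a < 1 := by
    rw [← Complex.sq_norm]; nlinarith [norm_nonneg a]
  have hZ : Complex.normSq z < 1 := by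
    rw [← Complex.sq_norm]; nlinarith [norm_nonneg z]
  have key : Complex.normSq (z + a) < Complex.normSq (1 + (starRingEnd ℂ) a * z) := by
    nlinarith [mobius_normSq_s3 a z]
  have hpos : 0 < ‖1 + (starRingEnd ℂ) a * z‖ := by
    simpa [norm_pos_iff] using hne
  rw [norm_div, div_lt_one hpos]
  rw [Complex.norm_def, Complex.norm_def]
  exact Real.sqrt_lt_sqrt (Complex.normSq_nonneg _) key

/-- Schwarz–Pick derivative estimate on the unit disc. -/
private lemma schwarz_pick {h : ℂ → ℂ} {d a : ℂ}
    (hd : DifferentiableOn ℂ h (Metric.ball 0 1))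
    (hm : Set.MapsTo h (Metric.ball 0 1) (Metric.ball 0 1))
    (ha : ‖a‖ < 1) (hda : HasDerivAt h d a) :
    ‖d‖ * (1 - ‖a‖ ^ 2) ≤ 1 - ‖h a‖ ^ 2 := by
  have hab : a ∈ Metric.ball (0 : ℂ) 1 := by
    simpa [Metric.mem_ball] using ha
  set b := h a with hb
  have hbb : ‖b‖ < 1 := by
    have := hm hab
    simpa [Metric.mem_ball] using this
  have hbb' : ‖-b‖ < 1 := by simpa using hbb
  set ψ : ℂ → ℂ := fun z => (z + a) / (1 + (starRingEnd ℂ) a * z) with hψdef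
  set M : ℂ → ℂ := fun w => (w + -b) / (1 + (starRingEnd ℂ) (-b) * w) with hMdef
  have hψmaps : Set.MapsTo ψ (Metric.ball 0 1) (Metric.ball 0 1) := mobius_mapsTo ha
  have hMmaps : Set.MapsTo M (Metric.ball 0 1) (Metric.ball 0 1) := mobius_mapsTo hbb'
  set g : ℂ → ℂ := fun z => M (h (ψ z)) with hgdef
  have hψdiff : DifferentiableOn ℂ ψ (Metric.ball 0 1) := by
    apply DifferentiableOn.div
    · exact (differentiable_id.add_const a).differentiableOn
    · exact ((differentiable_id.const_mul _).const_add 1).differentiableOn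
    · intro z hz
      rw [Metric.mem_ball, dist_zero_right] at hz
      exact mobius_denom_ne ha hz
  have hMdiffat : ∀ w ∈ Metric.ball (0 : ℂ) 1, DifferentiableAt ℂ M w := by
    intro w hw
    rw [Metric.mem_ball, dist_zero_right] at hw
    apply DifferentiableAt.div
    · exact differentiableAt_id.add_const _
    · exact (differentiableAt_id.const_mul _).const_add 1
    · exact mobius_denom_ne hbb' hw
  have hgdiff : DifferentiableOn ℂ g (Metric.ball 0 1) := by
    intro z hz
    have h1 : DifferentiableWithinAt ℂ (h ∘ ψ) (Metric.ball 0 1) z :=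
      (hd (ψ z) (hψmaps hz)).comp z (hψdiff z hz) hψmaps
    exact ((hMdiffat _ (hm (hψmaps hz))).comp_differentiableWithinAt z h1)
  have hgmaps : Set.MapsTo g (Metric.ball 0 1) (Metric.ball 0 1) := fun z hz =>
    hMmaps (hm (hψmaps hz))
  have hψ0 : ψ 0 = a := by simp [hψdef]
  have hg0 : g 0 = 0 := by
    simp only [hgdef, hψ0, ← hb, hMdef]
    simp
  -- derivative computations
  have hden0 : (1 + (starRingEnd ℂ) a * (0 : ℂ)) ≠ 0 := by simp
  have hnum1 : HasDerivAt (fun z : ℂ => z + a) 1 0 := (hasDerivAt_id _).add_const a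
  have hden1 : HasDerivAt (fun z : ℂ => 1 + (starRingEnd ℂ) a * z) ((starRingEnd ℂ) a) 0 := by
    simpa using (((hasDerivAt_id (0:ℂ)).const_mul ((starRingEnd ℂ) a)).const_add 1)
  have hψ'' : HasDerivAt ψ (1 - a * (starRingEnd ℂ) a) 0 := by
    have := hnum1.div hden1 hden0
    exact this.congr_deriv (by simp)
  have hcomp : HasDerivAt (fun z => h (ψ z)) (d * (1 - a * (starRingEnd ℂ) a)) 0 := by
    have := HasDerivAt.comp 0 (hψ0 ▸ hda) hψ''
    exact this
  have hbne : (1 + (starRingEnd ℂ) (-b) * b) ≠ 0 := mobius_denom_ne hbb' hbb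
  have hnum : HasDerivAt (fun z => h (ψ z) + -b) (d * (1 - a * (starRingEnd ℂ) a)) 0 :=
    hcomp.add_const _
  have hden : HasDerivAt (fun z => 1 + (starRingEnd ℂ) (-b) * h (ψ z))
      ((starRingEnd ℂ) (-b) * (d * (1 - a * (starRingEnd ℂ) a))) 0 :=
    (hcomp.const_mul _).const_add 1
  have hg' : HasDerivAt g
      ((d * (1 - a * (starRingEnd ℂ) a) * (1 + (starRingEnd ℂ) (-b) * h (ψ 0)) -
        (h (ψ 0) + -b) * ((starRingEnd ℂ) (-b) * (d * (1 - a * (starRingEnd ℂ) a)))) /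
        (1 + (starRingEnd ℂ) (-b) * h (ψ 0)) ^ 2) 0 := by
    exact HasDerivAt.div hnum hden (by rw [hψ0, ← hb]; exact hbne)
  have hg'' : HasDerivAt g (d * (1 - a * (starRingEnd ℂ) a) / (1 - (starRingEnd ℂ) b * b)) 0 := by
    convert hg' using 1
    rw [hψ0, ← hb]
    have h2 : (1 : ℂ) + (starRingEnd ℂ) (-b) * b = 1 - (starRingEnd ℂ) b * b := by
      simp; ring
    have h3 : (1:ℂ) - (starRingEnd ℂ) b * b ≠ 0 := h2 ▸ hbne
    rw [h2, add_neg_cancel, zero_mul, sub_zero]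
    field_simp
  have hgle : ‖deriv g 0‖ ≤ 1 := by
    apply Complex.norm_deriv_le_one_of_mapsTo_ball hgdiff (by rw [hg0]; exact hgmaps.mono_right Metric.ball_subset_closedBall) one_pos
  rw [hg''.deriv] at hgle
  -- simplify the absolute values
  have hma : (1 : ℂ) - a * (starRingEnd ℂ) a = ((1 - ‖a‖ ^ 2 : ℝ) : ℂ) := by
    rw [Complex.mul_conj, ← Complex.sq_norm]
    push_cast; ring
  have hmb : (1 : ℂ) - (starRingEnd ℂ) b * b = ((1 - ‖b‖ ^ 2 : ℝ) : ℂ) := by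
    rw [mul_comm, Complex.mul_conj, ← Complex.sq_norm]
    push_cast; ring
  have hA : (0:ℝ) < 1 - ‖a‖ ^ 2 := by nlinarith [norm_nonneg a]
  have hB : (0:ℝ) < 1 - ‖b‖ ^ 2 := by nlinarith [norm_nonneg b]
  rw [norm_div, norm_mul, hma, hmb, Complex.norm_real, Complex.norm_real, Real.norm_eq_abs, Real.norm_eq_abs,
    abs_of_pos hA, abs_of_pos hB, div_le_one hB] at hgle
  exact hgle

/-- Schwarz–Pick estimate: for an analytic self-map `φ` of the unit ball of a complex
Hilbert space, with radial derivative `Rφ(y) = φ'(y)(y)`, one has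
`|⟨Rφ(y), φ(y)⟩| ≤ ‖y‖‖φ(y)‖(1-‖φ(y)‖²)/(1-‖y‖²)`.  (The paper's inner product
`⟨a,b⟩` is linear in the first variable, i.e. it is Mathlib's `⟪b, a⟫`.) -/
theorem abs_inner_radialDeriv_le {E : Type*} [NormedAddCommGroup E]
    [InnerProductSpace ℂ E] [CompleteSpace E]
    (φ : E → E) (hφ : AnalyticOnNhd ℂ φ (Metric.ball 0 1))
    (hmap : Set.MapsTo φ (Metric.ball (0 : E) 1) (Metric.ball (0 : E) 1))
    (y : E) (hy : ‖y‖ < 1) :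
    ‖⟪φ y, fderiv ℂ φ y y⟫‖ ≤
      ‖y‖ * ‖φ y‖ * ((1 - ‖φ y‖ ^ 2) / (1 - ‖y‖ ^ 2)) := by
  have hyball : y ∈ Metric.ball (0 : E) 1 := by
    simpa [Metric.mem_ball, dist_zero_right] using hy
  rcases eq_or_ne y 0 with rfl | hy0
  · simp
  rcases eq_or_ne (φ y) 0 with hφy | hφy
  · simp [hφy]
  have hyn : (0:ℝ) < ‖y‖ := norm_pos_iff.mpr hy0
  have hφn : (0:ℝ) < ‖φ y‖ := norm_pos_iff.mpr hφy
  have hφylt : ‖φ y‖ < 1 := by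
    have := hmap hyball
    simpa [Metric.mem_ball, dist_zero_right] using this
  set u : E := ((‖y‖⁻¹ : ℝ) : ℂ) • y with hu
  set w : E := ((‖φ y‖⁻¹ : ℝ) : ℂ) • φ y with hw
  have hunorm : ‖u‖ = 1 := by
    rw [hu, norm_smul, Complex.norm_real, Real.norm_eq_abs,
      abs_of_pos (inv_pos.mpr hyn), inv_mul_cancel₀ hyn.ne']
  have hwnorm : ‖w‖ = 1 := by
    rw [hw, norm_smul, Complex.norm_real, Real.norm_eq_abs,
      abs_of_pos (inv_pos.mpr hφn), inv_mul_cancel₀ hφn.ne']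
  set ρ : ℂ → E := fun lam => lam • u with hρ
  have hρmaps : Set.MapsTo ρ (Metric.ball 0 1) (Metric.ball 0 1) := by
    intro z hz
    rw [Metric.mem_ball, dist_zero_right] at *
    rw [hρ]
    simpa [norm_smul, hunorm] using hz
  set h : ℂ → ℂ := fun lam => ⟪w, φ (ρ lam)⟫ with hh
  have hρdiff : Differentiable ℂ ρ := fun z => by
    simpa using (differentiable_id.smul_const u).differentiableAt (x := z)
  have hdiff : DifferentiableOn ℂ h (Metric.ball 0 1) := by
    intro z hz
    have h1 : DifferentiableWithinAt ℂ (fun lam => φ (ρ lam)) (Metric.ball 0 1) z :=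
      ((hφ (ρ z) (hρmaps hz)).differentiableAt.comp_differentiableWithinAt z
        (hρdiff z).differentiableWithinAt)
    exact (innerSL ℂ w).differentiableAt.comp_differentiableWithinAt z h1
  have hmaps : Set.MapsTo h (Metric.ball 0 1) (Metric.ball 0 1) := by
    intro z hz
    rw [Metric.mem_ball, dist_zero_right]
    have h1 : ‖(⟪w, φ (ρ z)⟫ : ℂ)‖ ≤ ‖w‖ * ‖φ (ρ z)‖ := norm_inner_le_norm _ _
    have h2 : ‖φ (ρ z)‖ < 1 := by
      have := hmap (hρmaps hz)
      simpa [Metric.mem_ball, dist_zero_right] using this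
    calc ‖h z‖ ≤ ‖w‖ * ‖φ (ρ z)‖ := h1
      _ = ‖φ (ρ z)‖ := by rw [hwnorm, one_mul]
      _ < 1 := h2
  set a : ℂ := ((‖y‖ : ℝ) : ℂ) with hadef
  have haabs : ‖a‖ = ‖y‖ := by
    rw [hadef, Complex.norm_real, Real.norm_eq_abs, abs_of_pos hyn]
  have ha : ‖a‖ < 1 := by rw [haabs]; exact hy
  have hρa : ρ a = y := by
    show ((‖y‖ : ℝ) : ℂ) • (((‖y‖⁻¹ : ℝ) : ℂ) • y) = y
    rw [smul_smul, ← Complex.ofReal_mul, mul_inv_cancel₀ hyn.ne']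
    simp
  -- derivative of h at a
  have hρ' : HasDerivAt ρ u a := by
    simpa using (hasDerivAt_id a).smul_const u
  have hφ' : HasFDerivAt φ (fderiv ℂ φ y) y :=
    ((hφ y hyball).differentiableAt.hasFDerivAt)
  have hφ'' : HasFDerivAt φ (fderiv ℂ φ y) (ρ a) := by rw [hρa]; exact hφ'
  have hc1 : HasDerivAt (fun lam => φ (ρ lam)) ((fderiv ℂ φ y) u) a := by
    exact hφ''.comp_hasDerivAt a hρ'
  have hd' : HasDerivAt h ⟪w, (fderiv ℂ φ y) u⟫ a := by
    have := (innerSL ℂ w).hasFDerivAt.comp_hasDerivAt a hc1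
    exact this
  have key := schwarz_pick hdiff hmaps ha hd'
  -- rewrite h a and the derivative
  have hha : h a = ((‖φ y‖ : ℝ) : ℂ) := by
    have e1 : h a = ⟪w, φ y⟫ := by simp only [hh, hρa]
    rw [e1, hw, inner_smul_left, inner_self_eq_norm_sq_to_K, Complex.conj_ofReal]
    have hz : ((‖φ y‖ : ℝ) : ℂ) ≠ 0 := by exact_mod_cast hφn.ne'
    rw [Complex.ofReal_inv]
    field_simp
    rfl
  have hderiv_eq : (⟪w, (fderiv ℂ φ y) u⟫ : ℂ) =
      ((‖φ y‖⁻¹ * ‖y‖⁻¹ : ℝ) : ℂ) * ⟪φ y, fderiv ℂ φ y y⟫ := by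
    rw [hw, hu, inner_smul_left, map_smul, inner_smul_right]
    rw [Complex.conj_ofReal]
    push_cast
    ring
  rw [hha, hderiv_eq] at key
  rw [haabs, Complex.norm_real, Real.norm_eq_abs, abs_of_pos hφn] at key
  rw [norm_mul, Complex.norm_real, Real.norm_eq_abs] at key
  have habs : |‖φ y‖⁻¹ * ‖y‖⁻¹| = ‖φ y‖⁻¹ * ‖y‖⁻¹ := abs_of_pos (by positivity)
  rw [habs] at key
  have h1y : (0:ℝ) < 1 - ‖y‖ ^ 2 := by nlinarith [norm_nonneg y]
  rw [← sub_nonneg]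
  have expand : ‖y‖ * ‖φ y‖ * ((1 - ‖φ y‖ ^ 2) / (1 - ‖y‖ ^ 2)) -
      ‖⟪φ y, fderiv ℂ φ y y⟫‖ =
      (‖y‖ * ‖φ y‖ / (1 - ‖y‖ ^ 2)) *
        ((1 - ‖φ y‖ ^ 2) -
          ‖φ y‖⁻¹ * ‖y‖⁻¹ * ‖⟪φ y, fderiv ℂ φ y y⟫‖ * (1 - ‖y‖ ^ 2)) := by
    field_simp
  rw [expand]
  apply mul_nonneg
  · positivity
  · linarith [key]
end

section
/- Let φ: B_E → B_E be an analytic map on the open unit ball of a complex Hilbert space. Then the radial derivative satisfies ‖Rφ(y)‖ ≤ 2·√(1 − ‖φ(y)‖²)/(1 − ‖y‖²) for every y ∈ B_E. -/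
open Metric

open scoped ComplexInnerProductSpace

/-- Schwarz lemma at the origin, with derivative given via `HasDerivAt`. -/
lemma schwarz0 {F : Type*} [NormedAddCommGroup F] [NormedSpace ℂ F] {f : ℂ → F} {d : F}
    (hf : DifferentiableOn ℂ f (ball 0 1))
    (hmaps : ∀ z ∈ ball (0:ℂ) 1, ‖f z‖ < 1) (h0 : f 0 = 0)
    (hd : HasDerivAt f d 0) : ‖d‖ ≤ 1 := by
  have hmaps' : Set.MapsTo f (ball (0:ℂ) 1) (ball (f 0) 1) := by
    intro z hz
    rw [h0, mem_ball_zero_iff]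
    exact hmaps z hz
  have := Complex.norm_deriv_le_div_of_mapsTo_ball hf (hmaps'.mono_right ball_subset_closedBall) one_pos
  rwa [hd.deriv, div_one] at this

lemma mobius_den_ne {s : ℝ} (hs : |s| < 1) {z : ℂ} (hz : ‖z‖ < 1) :
    (1 - (s:ℂ) * z) ≠ 0 := by
  intro h
  have h1 : (s:ℂ) * z = 1 := by linear_combination -h
  have := congrArg norm h1
  rw [norm_mul, Complex.norm_real, norm_one, Real.norm_eq_abs] at this
  nlinarith [norm_nonneg z, abs_nonneg s]

lemma mobius_norm_lt_one {s : ℝ} (hs : |s| < 1) {z : ℂ} (hz : ‖z‖ < 1) :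
    ‖(z - (s:ℂ)) / (1 - (s:ℂ) * z)‖ < 1 := by
  have hden := mobius_den_ne hs hz
  rw [norm_div, div_lt_one (norm_pos_iff.mpr hden)]
  have e : Complex.normSq (1 - (s:ℂ)*z) - Complex.normSq (z - (s:ℂ))
      = (1 - s^2)*(1 - Complex.normSq z) := by
    simp only [Complex.normSq_apply, Complex.sub_re, Complex.sub_im, Complex.mul_re,
      Complex.mul_im, Complex.ofReal_re, Complex.ofReal_im, Complex.one_re, Complex.one_im]
    ring
  have hz2 : Complex.normSq z < 1 := by
    rw [Complex.normSq_eq_norm_sq]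
    nlinarith [norm_nonneg z]
  have hs2 : s^2 < 1 := by nlinarith [abs_nonneg s, le_abs_self s, neg_abs_le s]
  have key : ‖z - (s:ℂ)‖^2 < ‖1 - (s:ℂ)*z‖^2 := by
    have h1 : ‖z - (s:ℂ)‖^2 = Complex.normSq (z - (s:ℂ)) := by
      rw [← Complex.sq_norm]
    have h2 : ‖1 - (s:ℂ)*z‖^2 = Complex.normSq (1 - (s:ℂ)*z) := by
      rw [← Complex.sq_norm]
    nlinarith
  nlinarith [norm_nonneg (z - (s:ℂ)), norm_nonneg (1 - (s:ℂ)*z)]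

lemma chi_lt_one {s : ℝ} (hs0 : 0 ≤ s) (hs1 : s < 1) {Fz Gz : ℂ}
    (h : ‖Fz‖^2 + ‖Gz‖^2 < 1) :
    ‖((Real.sqrt (1 - s^2) : ℝ) : ℂ) * Gz / (1 - (s:ℂ) * Fz)‖ < 1 := by
  have hF1 : ‖Fz‖ < 1 := by nlinarith [norm_nonneg Fz, norm_nonneg Gz, sq_nonneg ‖Gz‖]
  have hden : (1 - (s:ℂ) * Fz) ≠ 0 := mobius_den_ne (by rwa [abs_of_nonneg hs0]) hF1
  rw [norm_div, div_lt_one (norm_pos_iff.mpr hden)]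
  have hnum : ‖((Real.sqrt (1 - s^2) : ℝ) : ℂ) * Gz‖^2 = (1 - s^2) * ‖Gz‖^2 := by
    rw [norm_mul, Complex.norm_real, Real.norm_eq_abs, abs_of_nonneg (Real.sqrt_nonneg _),
      mul_pow, Real.sq_sqrt (by nlinarith)]
  have h2 : ‖1 - (s:ℂ)*Fz‖^2 = Complex.normSq (1 - (s:ℂ)*Fz) := by
    rw [← Complex.sq_norm]
  have e : Complex.normSq (1 - (s:ℂ)*Fz) = 1 - 2*s*Fz.re + s^2 * Complex.normSq Fz := by
    simp only [Complex.normSq_apply, Complex.sub_re, Complex.sub_im, Complex.mul_re,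
      Complex.mul_im, Complex.ofReal_re, Complex.ofReal_im, Complex.one_re, Complex.one_im]
    ring
  have hre : Fz.re ≤ ‖Fz‖ := Complex.re_le_norm Fz
  have hFsq : Complex.normSq Fz = ‖Fz‖^2 := by rw [← Complex.sq_norm]
  have key : ‖((Real.sqrt (1 - s^2) : ℝ) : ℂ) * Gz‖^2 < ‖1 - (s:ℂ)*Fz‖^2 := by
    rw [hnum, h2, e, hFsq]
    nlinarith [sq_nonneg (s - ‖Fz‖), norm_nonneg Gz, sq_nonneg ‖Gz‖,
      mul_pos (show (0:ℝ) < 1 - s^2 by nlinarith) (show (0:ℝ) < 1 - ‖Fz‖^2 - ‖Gz‖^2 by nlinarith)]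
  nlinarith [norm_nonneg (((Real.sqrt (1 - s^2) : ℝ) : ℂ) * Gz), norm_nonneg (1 - (s:ℂ)*Fz)]

set_option maxHeartbeats 1000000 in
/-- Schwarz–Pick estimate for the radial derivative: for an analytic self-map `φ` of the
unit ball of a complex Hilbert space, `‖Rφ(y)‖ ≤ 2√(1-‖φ(y)‖²)/(1-‖y‖²)`. -/
theorem norm_radialDeriv_le {E : Type*} [NormedAddCommGroup E]
    [InnerProductSpace ℂ E] [CompleteSpace E]
    (φ : E → E) (hφ : AnalyticOnNhd ℂ φ (Metric.ball 0 1))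
    (hmap : Set.MapsTo φ (Metric.ball (0 : E) 1) (Metric.ball (0 : E) 1))
    (y : E) (hy : ‖y‖ < 1) :
    ‖fderiv ℂ φ y y‖ ≤ 2 * Real.sqrt (1 - ‖φ y‖ ^ 2) / (1 - ‖y‖ ^ 2) := by
  by_cases hy0 : y = 0
  · subst hy0
    simp only [map_zero, norm_zero]
    positivity
  -- setup
  set r : ℝ := ‖y‖ with hr_def
  have hr0 : 0 < r := norm_pos_iff.mpr hy0
  have hr1 : r < 1 := hy
  have hr2 : 0 < 1 - r^2 := by nlinarith
  set u : E := ((r:ℂ))⁻¹ • y with hu_def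
  have hrC : ((r:ℂ)) ≠ 0 := by exact_mod_cast hr0.ne'
  have hu : ‖u‖ = 1 := by
    rw [hu_def, norm_smul, norm_inv, Complex.norm_real, Real.norm_eq_abs, abs_of_pos hr0]
    field_simp
    exact hr_def.symm
  have hyu : ((r:ℂ)) • u = y := smul_inv_smul₀ hrC y
  clear_value u
  have hyball : y ∈ ball (0:E) 1 := mem_ball_zero_iff.mpr hy
  -- Möbius map
  set m : ℂ → ℂ := fun z => (z - ((-r : ℝ) : ℂ)) / (1 - ((-r : ℝ) : ℂ) * z) with hm_def
  have hmr : |(-r : ℝ)| < 1 := by rw [abs_neg, abs_of_pos hr0]; exact hr1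
  have hm_maps : ∀ z ∈ ball (0:ℂ) 1, ‖m z‖ < 1 := fun z hz =>
    mobius_norm_lt_one hmr (mem_ball_zero_iff.mp hz)
  have hm_diff : ∀ z ∈ ball (0:ℂ) 1, DifferentiableAt ℂ m z := by
    intro z hz
    exact DifferentiableAt.div (by fun_prop) (by fun_prop)
      (mobius_den_ne hmr (mem_ball_zero_iff.mp hz))
  have hm0 : m 0 = (r:ℂ) := by simp [hm_def]
  have hm' : HasDerivAt m (((1 - r^2 : ℝ) : ℂ)) 0 := by
    have h1 : HasDerivAt (fun z : ℂ => z - ((-r:ℝ):ℂ)) 1 0 := (hasDerivAt_id 0).sub_const _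
    have h2 : HasDerivAt (fun z : ℂ => 1 - ((-r:ℝ):ℂ) * z) (-((-r:ℝ):ℂ)) 0 := by
      simpa using ((hasDerivAt_id 0).const_mul (((-r:ℝ):ℂ))).const_sub 1
    have hden0 : (1 - ((-r:ℝ):ℂ) * 0) ≠ 0 := by simp
    have h := h1.div h2 hden0
    refine h.congr_deriv ?_
    symm
    push_cast
    field_simp
    ring
  clear_value m
  -- the curve p and g = φ ∘ p
  set p : ℂ → E := fun z => m z • u with hp_def
  have hp_maps : ∀ z ∈ ball (0:ℂ) 1, p z ∈ ball (0:E) 1 := by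
    intro z hz
    rw [mem_ball_zero_iff, hp_def]
    simp only [norm_smul, hu, mul_one]
    exact hm_maps z hz
  have hp0 : p 0 = y := by rw [hp_def]; simp only [hm0]; exact hyu
  have hp' : HasDerivAt p (((1 - r^2 : ℝ) : ℂ) • u) 0 := hm'.smul_const u
  have hp_diff : ∀ z ∈ ball (0:ℂ) 1, DifferentiableAt ℂ p z := by
    intro z hz
    exact (hm_diff z hz).smul_const u
  clear_value p
  have hφy : DifferentiableAt ℂ φ y := (hφ y hyball).differentiableAt
  set g : ℂ → E := fun z => φ (p z) with hg_def
  set v : E := fderiv ℂ φ y u with hv_def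
  set w : E := ((1 - r^2 : ℝ) : ℂ) • v with hw_def
  have hg' : HasDerivAt g w 0 := by
    have h2 : HasFDerivAt φ (fderiv ℂ φ y) (p 0) := by rw [hp0]; exact hφy.hasFDerivAt
    have := h2.comp_hasDerivAt 0 hp'
    rw [hw_def, hv_def, ← map_smul]
    exact this
  have hg0 : g 0 = φ y := by rw [hg_def]; simp only [hp0]
  have hg_maps : ∀ z ∈ ball (0:ℂ) 1, ‖g z‖ < 1 := fun z hz =>
    mem_ball_zero_iff.mp (hmap (hp_maps z hz))
  have hg_diff : DifferentiableOn ℂ g (ball (0:ℂ) 1) := by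
    intro z hz
    exact (((hφ _ (hp_maps z hz)).differentiableAt).comp z (hp_diff z hz)).differentiableWithinAt
  clear_value g v w
  -- core estimate
  set s : ℝ := ‖φ y‖ with hs_def
  have hs1 : s < 1 := mem_ball_zero_iff.mp (hmap hyball)
  have hsnn : 0 ≤ s := norm_nonneg _
  have hSnn : 0 ≤ Real.sqrt (1 - s^2) := Real.sqrt_nonneg _
  have hs2 : 0 < 1 - s^2 := by nlinarith
  have hsqs : Real.sqrt (1 - s^2) ^ 2 = 1 - s^2 := Real.sq_sqrt hs2.le
  have hw_bound : ‖w‖ ≤ 2 * Real.sqrt (1 - s^2) := by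
    by_cases ha : φ y = 0
    · have h1 : ‖w‖ ≤ 1 := schwarz0 hg_diff hg_maps (by rw [hg0, ha]) hg'
      have hs0' : s = 0 := by rw [hs_def, ha, norm_zero]
      rw [hs0']
      norm_num
      linarith
    · -- main case: φ y ≠ 0
      have hs0 : 0 < s := by rw [hs_def]; exact norm_pos_iff.mpr ha
      have hsC : ((s:ℝ):ℂ) ≠ 0 := by exact_mod_cast hs0.ne'
      have hsabs : |s| < 1 := by rwa [abs_of_pos hs0]
      have h1C : ((1:ℂ) - (s:ℂ) * (s:ℂ)) ≠ 0 := by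
        intro hc
        have : ((1 - s^2 : ℝ):ℂ) = 0 := by push_cast; linear_combination hc
        exact hs2.ne' (by exact_mod_cast this)
      have h2C : ((1 - s^2 : ℝ):ℂ) ≠ 0 := by
        intro hc
        exact h1C (by push_cast at hc ⊢; linear_combination hc)
      set a : E := φ y with ha_def
      clear_value a
      -- the component along a
      set d₁ : ℂ := ⟪a, w⟫ / (s:ℂ) with hd1_def
      set F : ℂ → ℂ := fun z => ⟪a, g z⟫ / (s:ℂ) with hF_def
      have hF0 : F 0 = (s:ℂ) := by
        rw [hF_def]
        simp only [hg0, ← ha_def, inner_self_eq_norm_sq_to_K, ← hs_def]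
        rw [sq]
        field_simp
        rfl
      have hF_maps : ∀ z ∈ ball (0:ℂ) 1, ‖F z‖ < 1 := by
        intro z hz
        rw [hF_def]
        simp only [norm_div, Complex.norm_real, Real.norm_eq_abs, abs_of_pos hs0]
        rw [div_lt_one hs0]
        calc ‖⟪a, g z⟫‖ ≤ ‖a‖ * ‖g z‖ := norm_inner_le_norm a (g z)
          _ < ‖a‖ * 1 := mul_lt_mul_of_pos_left (hg_maps z hz) (hs_def ▸ hs0)
          _ = s := by rw [mul_one, ← hs_def]
      have hF' : HasDerivAt F d₁ 0 := by
        have h := ((innerSL ℂ a).hasFDerivAt.comp_hasDerivAt 0 hg').div_const ((s:ℝ):ℂ)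
        exact h
      have hF_diff : ∀ z ∈ ball (0:ℂ) 1, DifferentiableAt ℂ F z := by
        intro z hz
        exact (((innerSL ℂ a).differentiableAt.comp z
          ((hg_diff z hz).differentiableAt (isOpen_ball.mem_nhds hz)))).div_const _
      clear_value d₁ F
      have hden0 : (1 - (s:ℂ) * F 0) ≠ 0 := by
        rw [hF0]
        exact h1C
      -- σ ∘ F bound
      have bound1 : ‖d₁‖ ≤ 1 - s^2 := by
        set σ : ℂ → ℂ := fun z => (F z - (s:ℂ)) / (1 - (s:ℂ) * F z) with hσ_def
        have hσ_maps : ∀ z ∈ ball (0:ℂ) 1, ‖σ z‖ < 1 := fun z hz =>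
          mobius_norm_lt_one hsabs (hF_maps z hz)
        have hσ0 : σ 0 = 0 := by simp only [hσ_def]; rw [hF0]; simp
        have hσ_diff : DifferentiableOn ℂ σ (ball (0:ℂ) 1) := by
          intro z hz
          exact (((hF_diff z hz).sub_const _).div
            ((differentiableAt_const _).sub ((hF_diff z hz).const_mul _))
            (mobius_den_ne hsabs (hF_maps z hz))).differentiableWithinAt
        have hσ' : HasDerivAt σ (d₁ / ((1 - s^2 : ℝ) : ℂ)) 0 := by
          have h1 : HasDerivAt (fun z => F z - (s:ℂ)) d₁ 0 := hF'.sub_const _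
          have h2 : HasDerivAt (fun z => 1 - (s:ℂ) * F z) (-((s:ℂ) * d₁)) 0 :=
            (hF'.const_mul (s:ℂ)).const_sub 1
          have h := h1.div h2 hden0
          refine h.congr_deriv ?_
          symm
          rw [hF0]
          rw [div_eq_div_iff h2C (pow_ne_zero 2 h1C)]
          push_cast
          ring
        have := schwarz0 hσ_diff hσ_maps hσ0 hσ'
        rw [norm_div, Complex.norm_real, Real.norm_eq_abs, abs_of_pos hs2,
          div_le_one hs2] at this
        linarith
      -- orthogonal component
      set q : E := w - (⟪a, w⟫ / ((s:ℂ))^2) • a with hq_def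
      have haq : ⟪a, q⟫ = 0 := by
        rw [hq_def, inner_sub_right, inner_smul_right, inner_self_eq_norm_sq_to_K, ← hs_def]
        field_simp
        simp [RCLike.ofReal_eq_complex_ofReal]
      have hw_eq : w = (⟪a, w⟫ / ((s:ℂ))^2) • a + q := by rw [hq_def]; abel
      clear_value q
      have hPw : ‖(⟪a, w⟫ / ((s:ℂ))^2) • a‖ = ‖d₁‖ := by
        rw [norm_smul, hd1_def, norm_div, norm_div, norm_pow, Complex.norm_real,
          Real.norm_eq_abs, abs_of_pos hs0, ← hs_def]
        field_simp
      have bound2 : ‖q‖ ≤ Real.sqrt (1 - s^2) := by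
        by_cases hq0 : q = 0
        · rw [hq0, norm_zero]; exact hSnn
        · have hqn : (0:ℝ) < ‖q‖ := norm_pos_iff.mpr hq0
          have hqC : ((‖q‖:ℝ):ℂ) ≠ 0 := by exact_mod_cast hqn.ne'
          set b : E := ((‖q‖:ℝ):ℂ)⁻¹ • q with hb_def
          have hbnorm : ‖b‖ = 1 := by
            rw [hb_def, norm_smul, norm_inv, Complex.norm_real, Real.norm_eq_abs,
              abs_of_pos hqn]
            field_simp
          have hab : ⟪a, b⟫ = 0 := by
            rw [hb_def, inner_smul_right, haq, mul_zero]
          have hba : ⟪b, a⟫ = 0 := by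
            rw [← inner_conj_symm, hab, map_zero]
          have hbw : ⟪b, w⟫ = ((‖q‖:ℝ):ℂ) := by
            rw [hw_eq, inner_add_right, inner_smul_right, hba, mul_zero, zero_add,
              hb_def, inner_smul_left, inner_self_eq_norm_sq_to_K, map_inv₀,
              Complex.conj_ofReal, sq]
            field_simp
            rfl
          clear_value b
          set G : ℂ → ℂ := fun z => ⟪b, g z⟫ with hG_def
          have hG0 : G 0 = 0 := by
            simp only [hG_def, hg0, ← ha_def]
            exact hba
          have hG' : HasDerivAt G ((‖q‖:ℝ):ℂ) 0 := by
            have h := (innerSL ℂ b).hasFDerivAt.comp_hasDerivAt 0 hg'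
            simp only [innerSL_apply_apply] at h
            rw [← hbw]
            exact h
          have hG_diff : ∀ z ∈ ball (0:ℂ) 1, DifferentiableAt ℂ G z := by
            intro z hz
            exact (innerSL ℂ b).differentiableAt.comp z
              ((hg_diff z hz).differentiableAt (isOpen_ball.mem_nhds hz))
          clear_value G
          -- Bessel bound
          have hFG : ∀ z ∈ ball (0:ℂ) 1, ‖F z‖^2 + ‖G z‖^2 < 1 := by
            intro z hz
            set e₁ : E := ((s:ℝ):ℂ)⁻¹ • a with he1_def
            have h00 : ⟪e₁, e₁⟫ = (1:ℂ) := by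
              rw [he1_def, inner_smul_left, inner_smul_right, inner_self_eq_norm_sq_to_K,
                ← hs_def, map_inv₀, Complex.conj_ofReal]
              field_simp
              rfl
            have h01 : ⟪e₁, b⟫ = 0 := by
              rw [he1_def, inner_smul_left, hab, mul_zero]
            have h10 : ⟪b, e₁⟫ = 0 := by
              rw [← inner_conj_symm, h01, map_zero]
            have h11 : ⟪b, b⟫ = (1:ℂ) := by
              rw [inner_self_eq_norm_sq_to_K, hbnorm]
              norm_num
            have he1n : ‖e₁‖ = 1 := by
              have h := h00
              rw [inner_self_eq_norm_sq_to_K] at h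
              norm_cast at h
              have h2 : ‖e₁‖ ^ 2 = 1 := by exact_mod_cast (show ((‖e₁‖ ^ 2 : ℝ) : ℂ) = 1 from h)
              nlinarith [norm_nonneg e₁]
            have hON : Orthonormal ℂ (![e₁, b]) := by
              rw [orthonormal_iff_ite]
              intro i j
              fin_cases i <;> fin_cases j <;> simp [h00, h01, h10, h11, hbnorm, he1n]
            have hB := hON.sum_inner_products_le (g z) (s := Finset.univ)
            rw [Fin.sum_univ_two] at hB
            simp only [Matrix.cons_val_zero, Matrix.cons_val_one, Matrix.head_cons] at hB
            have he1gz : ⟪e₁, g z⟫ = F z := by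
              simp only [hF_def, he1_def, inner_smul_left, map_inv₀, Complex.conj_ofReal]
              ring
            rw [he1gz] at hB
            have hGz : ⟪b, g z⟫ = G z := by simp only [hG_def]
            rw [hGz] at hB
            have hgz := hg_maps z hz
            have hgz2 : ‖g z‖^2 < 1 := by nlinarith [norm_nonneg (g z)]
            calc ‖F z‖^2 + ‖G z‖^2 ≤ ‖g z‖^2 := hB
              _ < 1 := hgz2
          -- χ
          set χ : ℂ → ℂ := fun z =>
            ((Real.sqrt (1 - s^2) : ℝ) : ℂ) * G z / (1 - (s:ℂ) * F z) with hχ_def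
          have hχ_maps : ∀ z ∈ ball (0:ℂ) 1, ‖χ z‖ < 1 := fun z hz =>
            chi_lt_one hsnn hs1 (hFG z hz)
          have hχ0 : χ 0 = 0 := by simp only [hχ_def]; rw [hG0]; simp
          have hχ_diff : DifferentiableOn ℂ χ (ball (0:ℂ) 1) := by
            intro z hz
            exact (((hG_diff z hz).const_mul _).div
              ((differentiableAt_const _).sub ((hF_diff z hz).const_mul _))
              (mobius_den_ne hsabs (hF_maps z hz))).differentiableWithinAt
          have hχ' : HasDerivAt χ
              (((Real.sqrt (1 - s^2) : ℝ) : ℂ) * ((‖q‖:ℝ):ℂ) / ((1 - s^2 : ℝ):ℂ)) 0 := by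
            have h1 : HasDerivAt (fun z => ((Real.sqrt (1 - s^2) : ℝ) : ℂ) * G z)
                (((Real.sqrt (1 - s^2) : ℝ) : ℂ) * ((‖q‖:ℝ):ℂ)) 0 := hG'.const_mul _
            have h2 : HasDerivAt (fun z => 1 - (s:ℂ) * F z) (-((s:ℂ) * d₁)) 0 :=
              (hF'.const_mul (s:ℂ)).const_sub 1
            have h := h1.div h2 hden0
            refine h.congr_deriv ?_
            symm
            rw [hF0, hG0]
            rw [div_eq_div_iff h2C (pow_ne_zero 2 h1C)]
            push_cast
            ring
          have hsch := schwarz0 hχ_diff hχ_maps hχ0 hχ'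
          rw [norm_div, norm_mul, Complex.norm_real, Complex.norm_real, Complex.norm_real,
            Real.norm_eq_abs, Real.norm_eq_abs, Real.norm_eq_abs,
            abs_of_nonneg hSnn, abs_of_pos hqn, abs_of_pos hs2, div_le_one hs2] at hsch
          have hSpos : 0 < Real.sqrt (1 - s^2) := Real.sqrt_pos.mpr hs2
          nlinarith [hsch, hsqs, hSpos]
      -- combine
      have htri : ‖w‖ ≤ ‖d₁‖ + ‖q‖ := by
        calc ‖w‖ = ‖(⟪a, w⟫ / ((s:ℂ))^2) • a + q‖ := by rw [← hw_eq]
          _ ≤ ‖(⟪a, w⟫ / ((s:ℂ))^2) • a‖ + ‖q‖ := norm_add_le _ _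
          _ = ‖d₁‖ + ‖q‖ := by rw [hPw]
      have hts : 1 - s^2 ≤ Real.sqrt (1 - s^2) := by
        have hle1 : Real.sqrt (1 - s^2) ≤ 1 := Real.sqrt_le_one.mpr (by nlinarith)
        nlinarith
      linarith
  -- conclusion
  have hww : ‖w‖ = (1 - r^2) * ‖v‖ := by
    rw [hw_def, norm_smul, Complex.norm_real, Real.norm_eq_abs, abs_of_pos hr2]
  have hfy : fderiv ℂ φ y y = (r:ℂ) • v := by
    rw [hv_def, ← map_smul, hyu]
  have hfyn : ‖fderiv ℂ φ y y‖ = r * ‖v‖ := by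
    rw [hfy, norm_smul, Complex.norm_real, Real.norm_eq_abs, abs_of_pos hr0]
  rw [hfyn, le_div_iff₀ hr2]
  nlinarith [norm_nonneg v, hw_bound, hr0.le, hr1.le]
end

section
/- Let φ: B_E → B_E be analytic on the open unit ball of a complex Hilbert space with φ(y) ≠ 0 and Rφ(y) ≠ 0. Then ((1 − ‖y‖²)/‖y‖)·‖Rφ(y)‖ + ‖φ(y)‖²·|⟨Rφ(y)/‖Rφ(y)‖, φ(y)/‖φ(y)‖⟩|² ≤ 1. -/
open Complex Metric Set


noncomputable def mob (b w : ℂ) : ℂ := (w - b) / (1 - (starRingEnd ℂ) b * w)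

lemma mob_den_ne {b w : ℂ} (hb : ‖b‖ < 1) (hw : ‖w‖ < 1) :
    1 - (starRingEnd ℂ) b * w ≠ 0 := by
  intro h
  have h1 : (starRingEnd ℂ) b * w = 1 := by linear_combination -h
  have := congrArg (‖·‖) h1
  rw [norm_mul, norm_one, Complex.norm_conj] at this
  nlinarith [norm_nonneg b, norm_nonneg w]

lemma mob_normSq_key (b w : ℂ) :
    Complex.normSq (1 - (starRingEnd ℂ) b * w) - Complex.normSq (w - b)
      = (1 - Complex.normSq b) * (1 - Complex.normSq w) := by
  simp [Complex.normSq_apply, Complex.sub_re, Complex.sub_im, Complex.mul_re, Complex.mul_im,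
    Complex.conj_re, Complex.conj_im]
  ring

lemma mob_mapsTo {b : ℂ} (hb : ‖b‖ < 1) :
    MapsTo (mob b) (ball 0 1) (ball 0 1) := by
  intro w hw
  rw [mem_ball_zero_iff] at hw ⊢
  rw [mob, norm_div]
  have hden := mob_den_ne hb hw
  rw [div_lt_one (norm_pos_iff.2 hden)]
  have hkey := mob_normSq_key b w
  have h1 : Complex.normSq b < 1 := by
    have := Complex.sq_norm b; nlinarith [norm_nonneg b]
  have h2 : Complex.normSq w < 1 := by
    have hsq := Complex.sq_norm w
    nlinarith [norm_nonneg w]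
  have : Complex.normSq (w - b) < Complex.normSq (1 - (starRingEnd ℂ) b * w) := by nlinarith
  have := Real.sqrt_lt_sqrt (Complex.normSq_nonneg _) this
  simpa [Complex.norm_def] using this

lemma mob_hasDerivAt {b w : ℂ} (hb : ‖b‖ < 1) (hw : ‖w‖ < 1) :
    HasDerivAt (mob b) ((1 - Complex.normSq b) / (1 - (starRingEnd ℂ) b * w) ^ 2) w := by
  have hden := mob_den_ne hb hw
  have h1 : HasDerivAt (fun z : ℂ => z - b) 1 w := (hasDerivAt_id w).sub_const b
  have h2 : HasDerivAt (fun z : ℂ => 1 - (starRingEnd ℂ) b * z) (-(starRingEnd ℂ) b) w := by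
    simpa using ((hasDerivAt_id w).const_mul ((starRingEnd ℂ) b)).const_sub (1:ℂ)
  have := h1.div h2 hden
  have hcm : (starRingEnd ℂ) b * b = (Complex.normSq b : ℂ) := by
    rw [mul_comm]; exact Complex.mul_conj b
  have hval : ((1:ℂ) * (1 - (starRingEnd ℂ) b * w) - (w - b) * -(starRingEnd ℂ) b)
      / (1 - (starRingEnd ℂ) b * w) ^ 2
      = ((1:ℂ) - Complex.normSq b) / (1 - (starRingEnd ℂ) b * w) ^ 2 := by
    congr 1
    linear_combination -hcm
  exact hval ▸ this

lemma mob_diffOn {b : ℂ} (hb : ‖b‖ < 1) :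
    DifferentiableOn ℂ (mob b) (ball 0 1) := fun w hw =>
  ((mob_hasDerivAt hb (mem_ball_zero_iff.1 hw)).differentiableAt).differentiableWithinAt

lemma schwarzPick {f : ℂ → ℂ} (hd : DifferentiableOn ℂ f (ball 0 1))
    (hm : MapsTo f (ball 0 1) (ball 0 1)) {a : ℂ} (ha : ‖a‖ < 1) :
    (1 - ‖a‖ ^ 2) * ‖deriv f a‖ ≤ 1 - ‖f a‖ ^ 2 := by
  have haB : a ∈ ball (0:ℂ) 1 := by rwa [mem_ball_zero_iff]
  have hb : ‖f a‖ < 1 := by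
    have := hm haB; rwa [mem_ball_zero_iff] at this
  have hna : ‖-a‖ < 1 := by rwa [norm_neg]
  have h0 : ‖(0:ℂ)‖ < 1 := by simp
  have hψ0 : mob (-a) 0 = a := by simp [mob]
  set F : ℂ → ℂ := mob (f a) ∘ f ∘ mob (-a) with hF
  have hFd : DifferentiableOn ℂ F (ball 0 1) :=
    (mob_diffOn hb).comp (hd.comp (mob_diffOn hna) (mob_mapsTo hna))
      (hm.comp (mob_mapsTo hna))
  have hFm : MapsTo F (ball 0 1) (ball 0 1) :=
    (mob_mapsTo hb).comp (hm.comp (mob_mapsTo hna))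
  have hF0 : F 0 = 0 := by
    show mob (f a) (f (mob (-a) 0)) = 0
    rw [hψ0]; simp [mob]
  -- derivatives
  have hψ' : HasDerivAt (mob (-a)) ((1 - Complex.normSq a : ℝ) : ℂ) 0 := by
    have := mob_hasDerivAt hna h0
    simpa using this
  have hf' : HasDerivAt f (deriv f a) a :=
    (hd.differentiableAt (isOpen_ball.mem_nhds haB)).hasDerivAt
  have hσ' : HasDerivAt (mob (f a))
      (((1 - Complex.normSq (f a) : ℝ) : ℂ) / ((1 - Complex.normSq (f a) : ℝ) : ℂ) ^ 2)
      (f a) := by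
    have := mob_hasDerivAt hb hb
    have hcm : (starRingEnd ℂ) (f a) * f a = (Complex.normSq (f a) : ℂ) := by
      rw [mul_comm]; exact Complex.mul_conj (f a)
    rw [hcm] at this
    simpa using this
  have hc1 : HasDerivAt (f ∘ mob (-a)) (deriv f a * ((1 - Complex.normSq a : ℝ) : ℂ)) 0 := by
    refine HasDerivAt.comp 0 ?_ hψ'
    rwa [hψ0]
  have hc2 : HasDerivAt F
      ((((1 - Complex.normSq (f a) : ℝ) : ℂ) / ((1 - Complex.normSq (f a) : ℝ) : ℂ) ^ 2) *
        (deriv f a * ((1 - Complex.normSq a : ℝ) : ℂ))) 0 := by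
    refine HasDerivAt.comp 0 ?_ hc1
    have : (f ∘ mob (-a)) 0 = f a := by rw [Function.comp_apply, hψ0]
    rwa [this]
  have hle := Complex.norm_deriv_le_one_of_mapsTo_ball hFd
    (by rw [hF0]; exact hFm.mono_right ball_subset_closedBall) one_pos
  rw [hc2.deriv] at hle
  have hnb : (0:ℝ) < 1 - Complex.normSq (f a) := by
    have := Complex.sq_norm (f a); nlinarith [norm_nonneg (f a)]
  have hna' : (0:ℝ) ≤ 1 - Complex.normSq a := by
    have := Complex.sq_norm a; nlinarith [norm_nonneg a]
  rw [norm_mul, norm_mul, norm_div, norm_pow, Complex.norm_real, Complex.norm_real,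
    Real.norm_eq_abs, Real.norm_eq_abs, abs_of_pos hnb, _root_.abs_of_nonneg hna'] at hle
  rw [Complex.sq_norm, Complex.sq_norm]
  have hsimp : (1 - Complex.normSq (f a)) / (1 - Complex.normSq (f a)) ^ 2
      = (1 - Complex.normSq (f a))⁻¹ := by
    field_simp
  rw [hsimp] at hle
  calc (1 - Complex.normSq a) * ‖deriv f a‖
      = (1 - Complex.normSq (f a)) *
        ((1 - Complex.normSq (f a))⁻¹ * (‖deriv f a‖ * (1 - Complex.normSq a))) := by
        field_simp
    _ ≤ (1 - Complex.normSq (f a)) * 1 := by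
        exact mul_le_mul_of_nonneg_left hle hnb.le
    _ = 1 - Complex.normSq (f a) := mul_one _




open scoped ComplexInnerProductSpace

/-- For an analytic self-map `φ` of the unit ball of a complex Hilbert space with
`φ(y) ≠ 0` and `Rφ(y) ≠ 0`, where `Rφ(y) = φ'(y)(y)` is the radial derivative:
`((1-‖y‖²)/‖y‖)‖Rφ(y)‖ + ‖φ(y)‖²|⟨Rφ(y)/‖Rφ(y)‖, φ(y)/‖φ(y)‖⟩|² ≤ 1`. -/
theorem radialDeriv_mixed_le_one {E : Type*} [NormedAddCommGroup E]
    [InnerProductSpace ℂ E] [CompleteSpace E]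
    (φ : E → E) (hφ : AnalyticOnNhd ℂ φ (Metric.ball 0 1))
    (hmap : Set.MapsTo φ (Metric.ball (0 : E) 1) (Metric.ball (0 : E) 1))
    (y : E) (hy : ‖y‖ < 1) (hy0 : y ≠ 0)
    (hφy : φ y ≠ 0) (hR : fderiv ℂ φ y y ≠ 0) :
    (1 - ‖y‖ ^ 2) / ‖y‖ * ‖fderiv ℂ φ y y‖ +
      ‖φ y‖ ^ 2 *
        ‖⟪(‖φ y‖⁻¹ : ℝ) • φ y, (‖fderiv ℂ φ y y‖⁻¹ : ℝ) • fderiv ℂ φ y y⟫‖ ^ 2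
      ≤ 1 := by
  have hr : (0:ℝ) < ‖y‖ := norm_pos_iff.2 hy0
  set R : E := fderiv ℂ φ y y with hRdef
  have hRn : (0:ℝ) < ‖R‖ := norm_pos_iff.2 hR
  set v : E := (‖y‖⁻¹ : ℝ) • y with hvdef
  have hv : ‖v‖ = 1 := by
    rw [hvdef, norm_smul, norm_inv, norm_norm, inv_mul_cancel₀ hr.ne']
  set u : E := (‖R‖⁻¹ : ℝ) • R with hudef
  have hu : ‖u‖ = 1 := by
    rw [hudef, norm_smul, norm_inv, norm_norm, inv_mul_cancel₀ hRn.ne']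
  have hyB : y ∈ Metric.ball (0:E) 1 := mem_ball_zero_iff.2 hy
  have hcoe : ∀ (r : ℝ) (x : E), ((r : ℝ) : ℂ) • x = r • x := fun r x => by
    rw [← Complex.coe_algebraMap]; exact algebraMap_smul ℂ r x
  -- the auxiliary one-variable map
  set g : ℂ → ℂ := fun z => ⟪u, φ (z • v)⟫ with hgdef
  have hmapv : ∀ z : ℂ, z ∈ Metric.ball (0:ℂ) 1 → z • v ∈ Metric.ball (0:E) 1 := by
    intro z hz
    rw [mem_ball_zero_iff] at hz ⊢
    rw [norm_smul, hv, mul_one]; exact hz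
  have hdg : DifferentiableOn ℂ g (Metric.ball 0 1) := by
    intro z hz
    have h1 : DifferentiableAt ℂ (fun z : ℂ => z • v) z :=
      (differentiable_id.smul_const v) z
    have h2 : DifferentiableAt ℂ φ (z • v) :=
      (hφ _ (hmapv z hz)).differentiableAt
    exact ((innerSL ℂ u).differentiableAt.comp z (h2.comp z h1)).differentiableWithinAt
  have hmg : Set.MapsTo g (Metric.ball 0 1) (Metric.ball 0 1) := by
    intro z hz
    rw [mem_ball_zero_iff]
    calc ‖g z‖ ≤ ‖u‖ * ‖φ (z • v)‖ := norm_inner_le_norm u _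
      _ = ‖φ (z • v)‖ := by rw [hu, one_mul]
      _ < 1 := mem_ball_zero_iff.1 (hmap (hmapv z hz))
  set a : ℂ := (‖y‖ : ℂ) with hadef
  have ha : ‖a‖ < 1 := by
    rw [hadef, Complex.norm_real, Real.norm_eq_abs, abs_of_pos hr]; exact hy
  have hav : a • v = y := by
    rw [hadef, hvdef, hcoe, smul_smul, mul_inv_cancel₀ hr.ne', one_smul]
  -- derivative of g at a
  have hF : HasFDerivAt φ (fderiv ℂ φ y) y := ((hφ y hyB).differentiableAt).hasFDerivAt
  have h1 : HasDerivAt (fun z : ℂ => z • v) v a := by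
    simpa using (hasDerivAt_id a).smul_const v
  have h2 : HasDerivAt (fun z : ℂ => φ (z • v)) (fderiv ℂ φ y v) a := by
    have hF' : HasFDerivAt φ (fderiv ℂ φ y) (a • v) := by rwa [hav]
    exact hF'.comp_hasDerivAt a h1
  have h3 : HasDerivAt g ⟪u, fderiv ℂ φ y v⟫ a :=
    (innerSL ℂ u).hasFDerivAt.comp_hasDerivAt a h2
  have hderval : ⟪u, fderiv ℂ φ y v⟫ = ((‖y‖⁻¹ * ‖R‖ : ℝ) : ℂ) := by
    rw [hvdef, ← hcoe, map_smul, hudef, ← hcoe, inner_smul_left, inner_smul_right,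
      ← hRdef, inner_self_eq_norm_sq_to_K, Complex.conj_ofReal]
    push_cast
    rw [sq]
    field_simp
    rw [sq]
    exact mul_div_mul_left _ _ (Complex.ofReal_ne_zero.2 hRn.ne')
  have hga : g a = ⟪u, φ y⟫ := by rw [hgdef]; simp only [hav]
  have hSP := schwarzPick hdg hmg ha
  rw [h3.deriv, hderval, hga] at hSP
  rw [hadef, Complex.norm_real, Real.norm_eq_abs, abs_of_pos hr, Complex.norm_real, Real.norm_eq_abs,
    abs_of_pos (by positivity : (0:ℝ) < ‖y‖⁻¹ * ‖R‖)] at hSP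
  -- identify the inner-product term
  have hT : ‖φ y‖ ^ 2 * ‖⟪(‖φ y‖⁻¹ : ℝ) • φ y, u⟫‖ ^ 2
      = ‖⟪u, φ y⟫‖ ^ 2 := by
    have hφn : (0:ℝ) < ‖φ y‖ := norm_pos_iff.2 hφy
    rw [← hcoe, inner_smul_left, Complex.conj_ofReal,
      norm_mul, Complex.norm_real, Real.norm_eq_abs, abs_of_pos (inv_pos.2 hφn)]
    rw [← Complex.norm_conj ⟪φ y, u⟫, inner_conj_symm]
    field_simp
  rw [hT]
  have harith : (1 - ‖y‖ ^ 2) / ‖y‖ * ‖R‖ = (1 - ‖y‖ ^ 2) * (‖y‖⁻¹ * ‖R‖) := by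
    field_simp
  rw [harith]
  linarith
end

section
/- Let φ: B_E → B_E be analytic with φ(z) ≠ 0 at a point z. Then there exists a unit vector η ∈ E with ⟨φ(z), η⟩ = 0 such that for ξ = φ(z) + √(1 − ‖φ(z)‖²)·η one has |⟨Rφ(z), ξ⟩| ≥ √(1 − ‖φ(z)‖²)·‖Rφ(z)‖ − (1 + √(1 − ‖φ(z)‖²)/‖φ(z)‖)·|⟨Rφ(z), φ(z)⟩|. -/
open scoped ComplexInnerProductSpace

theorem aux_eta {E : Type*} [NormedAddCommGroup E] [InnerProductSpace ℂ E] [CompleteSpace E]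
    (hdim : 2 ≤ Module.rank ℂ E) (v w : E) (hv : v ≠ 0) :
    ∃ η : E, ‖η‖ = 1 ∧ ⟪η, v⟫ = 0 ∧
      (⟪η, w⟫ : ℂ) = (‖w - (⟪v, w⟫ / (‖v‖ : ℂ)^2) • v‖ : ℝ) := by
  set c : ℂ := ⟪v, w⟫ / (‖v‖ : ℂ)^2 with hc
  set u : E := w - c • v with hu
  have hnv : (‖v‖ : ℝ) ≠ 0 := norm_ne_zero_iff.mpr hv
  have hnvc : ((‖v‖ : ℝ) : ℂ) ≠ 0 := by exact_mod_cast hnv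
  have hvv : (⟪v, v⟫ : ℂ) = (‖v‖ : ℂ)^2 := by
    simp [inner_self_eq_norm_sq_to_K]
  have huv : (⟪u, v⟫ : ℂ) = 0 := by
    rw [hu, inner_sub_left, inner_smul_left, hvv, hc]
    rw [map_div₀, inner_conj_symm]
    have : (starRingEnd ℂ) ((‖v‖ : ℂ)^2) = (‖v‖ : ℂ)^2 := by
      rw [map_pow, Complex.conj_ofReal]
    rw [this]
    field_simp
    ring
  have huw : (⟪u, w⟫ : ℂ) = (‖u‖ : ℂ)^2 := by
    have hw : w = u + c • v := by rw [hu]; abel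
    calc (⟪u, w⟫ : ℂ) = ⟪u, u + c • v⟫ := by rw [← hw]
    _ = ⟪u, u⟫ + c * ⟪u, v⟫ := by rw [inner_add_right, inner_smul_right]
    _ = (‖u‖ : ℂ)^2 := by rw [huv, mul_zero, add_zero]; simp [inner_self_eq_norm_sq_to_K]
  by_cases h : u = 0
  · have hne : (ℂ ∙ v)ᗮ ≠ ⊥ := by
      intro hbot
      have htop : (ℂ ∙ v) = ⊤ := (Submodule.orthogonal_eq_bot_iff).mp hbot
      have h1 : Module.rank ℂ (ℂ ∙ v : Submodule ℂ E) ≤ 1 := by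
        simpa using rank_span_le (R := ℂ) ({v} : Set E)
      rw [htop, rank_top] at h1
      exact absurd (hdim.trans h1) (by norm_num)
    obtain ⟨x, hx, hx0⟩ := Submodule.exists_mem_ne_zero_of_ne_bot hne
    have hnx : (‖x‖ : ℝ) ≠ 0 := norm_ne_zero_iff.mpr hx0
    have hxv : (⟪x, v⟫ : ℂ) = 0 := by
      have := (Submodule.mem_orthogonal _ x).mp hx v (Submodule.mem_span_singleton_self v)
      rw [← inner_conj_symm, this, map_zero]
    refine ⟨((‖x‖ : ℂ))⁻¹ • x, ?_, ?_, ?_⟩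
    · simp [norm_smul, hnx]
    · rw [inner_smul_left, hxv, mul_zero]
    · have hw : w = c • v := by rw [hu, sub_eq_zero] at h; exact h
      rw [h, hw, inner_smul_left, inner_smul_right, hxv, mul_zero, mul_zero, norm_zero]
      norm_num
  · have hnu : (‖u‖ : ℝ) ≠ 0 := norm_ne_zero_iff.mpr h
    have hnuc : ((‖u‖ : ℝ) : ℂ) ≠ 0 := by exact_mod_cast hnu
    refine ⟨((‖u‖ : ℂ))⁻¹ • u, ?_, ?_, ?_⟩
    · simp [norm_smul, hnu]
    · rw [inner_smul_left, huv, mul_zero]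
    · rw [inner_smul_left, huw, map_inv₀, Complex.conj_ofReal]
      field_simp

/-- For an analytic self-map `φ` of the unit ball of a complex Hilbert space of dimension
at least `2`, with `φ(z) ≠ 0` at a point `z` of the ball, there is a unit vector `η`
orthogonal to `φ(z)` such that, setting `ξ = φ(z) + √(1-‖φ(z)‖²)·η` and writing
`Rφ(z) = φ'(z)(z)` for the radial derivative,
`|⟨Rφ(z), ξ⟩| ≥ √(1-‖φ(z)‖²)‖Rφ(z)‖ - (1 + √(1-‖φ(z)‖²)/‖φ(z)‖)|⟨Rφ(z), φ(z)⟩|`. -/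
theorem exists_eta_lower_bound {E : Type*} [NormedAddCommGroup E]
    [InnerProductSpace ℂ E] [CompleteSpace E] (hdim : 2 ≤ Module.rank ℂ E)
    (φ : E → E) (hφ : AnalyticOnNhd ℂ φ (Metric.ball 0 1))
    (hmap : Set.MapsTo φ (Metric.ball (0 : E) 1) (Metric.ball (0 : E) 1))
    (z : E) (hz : ‖z‖ < 1) (hφz : φ z ≠ 0) :
    ∃ η : E, ‖η‖ = 1 ∧ ⟪η, φ z⟫ = 0 ∧
      Real.sqrt (1 - ‖φ z‖ ^ 2) * ‖fderiv ℂ φ z z‖ -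
          (1 + Real.sqrt (1 - ‖φ z‖ ^ 2) / ‖φ z‖) *
            ‖⟪φ z, fderiv ℂ φ z z⟫‖ ≤
        ‖⟪φ z + (Real.sqrt (1 - ‖φ z‖ ^ 2) : ℂ) • η, fderiv ℂ φ z z⟫‖ := by
  set v := φ z with hvdef
  set w := fderiv ℂ φ z z with hwdef
  obtain ⟨η, hη1, hηv, hηw⟩ := aux_eta hdim v w hφz
  refine ⟨η, hη1, hηv, ?_⟩
  set s : ℝ := Real.sqrt (1 - ‖v‖ ^ 2) with hs
  set a : ℂ := ⟪v, w⟫ with ha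
  set c : ℂ := a / (‖v‖ : ℂ)^2 with hc
  set u : E := w - c • v with hu
  have hs0 : 0 ≤ s := Real.sqrt_nonneg _
  have hnv : (0 : ℝ) < ‖v‖ := norm_pos_iff.mpr hφz
  have hexp : (⟪v + (s : ℂ) • η, w⟫ : ℂ) = a + (s : ℂ) * (‖u‖ : ℂ) := by
    rw [inner_add_left, inner_smul_left, Complex.conj_ofReal, hηw]
  have h1 : s * ‖u‖ - ‖a‖ ≤ ‖(⟪v + (s : ℂ) • η, w⟫ : ℂ)‖ := by
    rw [hexp]
    have h2 : ‖(s : ℂ) * (‖u‖ : ℂ)‖ = s * ‖u‖ := by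
      rw [norm_mul, Complex.norm_real, Complex.norm_real,
        Real.norm_of_nonneg hs0, norm_norm]
    have h3 : ‖(s : ℂ) * (‖u‖ : ℂ)‖ ≤
        ‖a + (s : ℂ) * (‖u‖ : ℂ)‖ + ‖a‖ := by
      have hadd := norm_add_le (a + (s : ℂ) * (‖u‖ : ℂ)) (-a)
      have he : a + (s : ℂ) * (‖u‖ : ℂ) + -a = (s : ℂ) * (‖u‖ : ℂ) := by ring
      rw [he, norm_neg] at hadd
      exact hadd
    linarith [h2 ▸ h3]
  have hca : ‖c‖ = ‖a‖ / ‖v‖ ^ 2 := by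
    rw [hc, norm_div, norm_pow, Complex.norm_real, norm_norm]
  have hwb : ‖w‖ ≤ ‖u‖ + ‖a‖ / ‖v‖ := by
    have hw2 : w = u + c • v := by rw [hu]; abel
    calc ‖w‖ = ‖u + c • v‖ := by rw [← hw2]
      _ ≤ ‖u‖ + ‖c • v‖ := norm_add_le _ _
      _ = ‖u‖ + ‖a‖ / ‖v‖ := by
          rw [norm_smul, hca]
          field_simp
  have habs0 : 0 ≤ ‖a‖ := norm_nonneg _
  have key : s * ‖w‖ - (1 + s / ‖v‖) * ‖a‖ ≤ s * ‖u‖ - ‖a‖ := by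
    have h4 : s * ‖w‖ ≤ s * (‖u‖ + ‖a‖ / ‖v‖) :=
      mul_le_mul_of_nonneg_left hwb hs0
    have h5 : s * (‖a‖ / ‖v‖) = (s / ‖v‖) * ‖a‖ := by ring
    nlinarith [h4]
  linarith [key, h1]
end

section
/- Let f: B_E → ℂ be analytic on the open unit ball of a complex Hilbert space and x ∈ B_E with x ≠ 0. Then the radial derivative satisfies the integral formula (1 − ‖x‖²)·f'(x)(x) = −(1/(2πi))·∮_{|ξ|=1} f(φ_x(ξx))·dξ/ξ², where φ_x is the Möbius automorphism of B_E. -/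
open scoped ComplexInnerProductSpace Classical

/-- Integral formula for the radial derivative: for `f` analytic on the unit ball of a
complex Hilbert space and `x ≠ 0` in the ball,
`(1-‖x‖²) f'(x)(x) = -(1/(2πi)) ∮_{|ξ|=1} f(φ_x(ξ x)) dξ/ξ²`. -/
theorem radial_deriv_circle_integral {E : Type*} [NormedAddCommGroup E]
    [InnerProductSpace ℂ E] [CompleteSpace E]
    (f : E → ℂ) (hf : AnalyticOnNhd ℂ f (Metric.ball 0 1))
    (x : E) (hx : ‖x‖ < 1) (hx0 : x ≠ 0) :
    ((1 - ‖x‖ ^ 2 : ℝ) : ℂ) * fderiv ℂ f x x =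
      -(1 / (2 * Real.pi * Complex.I)) *
        ∮ ξ in C(0, 1), f (mobius x (ξ • x)) / ξ ^ 2 := by
  have hr0 : 0 < ‖x‖ := norm_pos_iff.mpr hx0
  set t : ℂ := ((‖x‖ ^ 2 : ℝ) : ℂ) with ht
  set μ : ℂ → ℂ := fun ξ => (1 - ξ) / (1 - ξ * t) with hμ
  set g : ℂ → ℂ := fun ξ => f (μ ξ • x) with hg
  -- denominator nonzero on closed unit disc
  have hden : ∀ ξ : ℂ, ‖ξ‖ ≤ 1 → (1 : ℂ) - ξ * t ≠ 0 := by
    intro ξ hξ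
    intro h
    have h1 : ξ * t = 1 := by linear_combination -h
    have h2 : ‖ξ * t‖ = 1 := by rw [h1]; simp
    rw [norm_mul] at h2
    have h3 : ‖t‖ = ‖x‖ ^ 2 := by
      rw [ht, Complex.norm_real, Real.norm_eq_abs, abs_of_nonneg (sq_nonneg _)]
    rw [h3] at h2
    nlinarith [norm_nonneg ξ]
  -- mobius identity
  have hmob : ∀ ξ : ℂ, ‖ξ‖ ≤ 1 → mobius x (ξ • x) = μ ξ • x := by
    intro ξ hξ
    have h1 : ⟪x, ξ • x⟫ = ξ * t := by
      rw [inner_smul_right, inner_self_eq_norm_sq_to_K]; push_cast [ht]; rfl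
    simp only [mobius, if_neg hx0, h1]
    have h2 : x - ξ • x = (1 - ξ) • x := by rw [sub_smul, one_smul]
    rw [h2, smul_smul]
    have h3 : ((1:ℂ) - ξ * t)⁻¹ * (1 - ξ) = μ ξ := by rw [hμ]; field_simp
    rw [h3]
    have h4 : ⟪x, μ ξ • x⟫ = μ ξ * t := by
      rw [inner_smul_right, inner_self_eq_norm_sq_to_K]; push_cast [ht]; rfl
    rw [h4]
    have ht0 : t ≠ 0 := by
      rw [ht]
      exact_mod_cast (by positivity : (0:ℝ) < ‖x‖ ^ 2).ne'
    have hx2 : ((‖x‖:ℂ)) ^ 2 ≠ 0 := by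
      exact_mod_cast (by positivity : (0:ℝ) < ‖x‖ ^ 2).ne'
    have h5 : μ ξ * t / ((‖x‖:ℂ)^2) = μ ξ := by
      rw [ht, Complex.ofReal_pow, mul_div_assoc, div_self hx2, mul_one]
    rw [h5]
    simp
  -- image in the ball
  have himg : ∀ ξ : ℂ, ‖ξ‖ ≤ 1 → ‖μ ξ • x‖ < 1 := by
    intro ξ hξ
    rw [norm_smul, hμ]
    rw [norm_div]
    rw [div_mul_eq_mul_div, div_lt_one (norm_pos_iff.mpr (hden ξ hξ))]
    have h1 : ‖(1:ℂ) - ξ‖ ^ 2 = (1 - ξ.re)^2 + ξ.im^2 := by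
      rw [Complex.sq_norm]
      simp [Complex.normSq_apply]
      ring
    have ht' : t = Complex.ofReal (‖x‖ ^ 2) := by rw [ht]
    have h2 : ‖(1:ℂ) - ξ * t‖ ^ 2 = (1 - ξ.re * ‖x‖^2)^2 + (ξ.im * ‖x‖^2)^2 := by
      have htre : t.re = ‖x‖ ^ 2 := by
        rw [ht, Complex.ofReal_re]
      have htim : t.im = 0 := by
        rw [ht, Complex.ofReal_im]
      rw [Complex.sq_norm]
      simp only [Complex.normSq_apply, Complex.sub_re, Complex.sub_im, Complex.one_re,
        Complex.one_im, Complex.mul_re, Complex.mul_im, htre, htim]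
      ring
    have hξ2 : ξ.re^2 + ξ.im^2 ≤ 1 := by
      have h : Complex.normSq ξ ≤ 1 := by
        rw [Complex.normSq_eq_norm_sq]
        nlinarith [norm_nonneg ξ]
      rw [Complex.normSq_apply] at h
      nlinarith
    have key2 : (‖(1:ℂ) - ξ‖ * ‖x‖) ^ 2 < ‖(1:ℂ) - ξ * t‖ ^ 2 := by
      rw [mul_pow, h1, h2]
      nlinarith [mul_pos (by nlinarith : (0:ℝ) < 1 - ‖x‖ ^ 2)
        (by nlinarith : (0:ℝ) < 1 - ‖x‖ ^ 2 * (ξ.re ^ 2 + ξ.im ^ 2))]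
    exact lt_of_pow_lt_pow_left₀ 2 (norm_nonneg _) key2
  -- g differentiable on the closed unit disc
  have hgdiff : DifferentiableOn ℂ g (Metric.closedBall 0 1) := by
    intro ξ hξ
    have hξ1 : ‖ξ‖ ≤ 1 := by simpa using Metric.mem_closedBall.mp hξ
    apply DifferentiableAt.differentiableWithinAt
    have hμd : DifferentiableAt ℂ μ ξ := by
      apply DifferentiableAt.div
      · fun_prop
      · fun_prop
      · exact hden ξ hξ1
    have hfd : DifferentiableAt ℂ f (μ ξ • x) :=
      (hf _ (by simpa using himg ξ hξ1)).differentiableAt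
    exact hfd.comp ξ (hμd.smul_const x)
  have hpow := hgdiff.hasFPowerSeriesOnBall (R := 1) one_pos
  have hderiv_eq : deriv g 0 = (cauchyPowerSeries g 0 1).coeff 1 :=
    hpow.hasFPowerSeriesAt.deriv
  -- compute coefficient
  have hcoeff : (cauchyPowerSeries g 0 1).coeff 1
      = (2 * Real.pi * Complex.I : ℂ)⁻¹ • (∮ z in C(0, 1), g z / z ^ 2) := by
    have happ := cauchyPowerSeries_apply g 0 1 1 1
    rw [FormalMultilinearSeries.coeff, show (1 : Fin 1 → ℂ) = fun _ => (1:ℂ) from rfl, happ]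
    congr 1
    apply circleIntegral.integral_congr one_pos.le
    intro z hz
    simp only [Metric.mem_sphere] at hz
    have hz0 : z ≠ 0 := by
      intro h; rw [h] at hz; simp at hz
    simp only [sub_zero, smul_eq_mul, pow_one, one_div]
    rw [pow_two, div_eq_mul_inv, mul_inv]
    ring
  -- compute deriv g 0 by chain rule
  have hμ0 : μ 0 = 1 := by simp [hμ]
  have hμd0 : HasDerivAt μ (t - 1) 0 := by
    have hnum : HasDerivAt (fun ξ : ℂ => 1 - ξ) (-1) 0 := (hasDerivAt_id 0).const_sub 1
    have hdenom : HasDerivAt (fun ξ : ℂ => 1 - ξ * t) (-t) 0 := by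
      simpa using ((hasDerivAt_id (0:ℂ)).mul_const t).const_sub 1
    have := hnum.div hdenom (by simpa using hden 0 (by simp))
    rw [show t - 1 = (-1 * (1 - 0 * t) - (1 - 0) * -t) / (1 - 0 * t) ^ 2 by ring]
    exact this
  have hhd : HasDerivAt (fun ξ : ℂ => μ ξ • x) ((t - 1) • x) 0 := hμd0.smul_const x
  have hfd : HasFDerivAt f (fderiv ℂ f x) x :=
    (hf x (by simpa using hx)).differentiableAt.hasFDerivAt
  have hgd : HasDerivAt g (fderiv ℂ f x ((t - 1) • x)) 0 := by
    have h0 : μ 0 • x = x := by rw [hμ0, one_smul]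
    have hfd' : HasFDerivAt f (fderiv ℂ f x) (μ 0 • x) := by rw [h0]; exact hfd
    exact hfd'.comp_hasDerivAt 0 hhd
  have hderiv : deriv g 0 = (t - 1) * fderiv ℂ f x x := by
    rw [hgd.deriv, ContinuousLinearMap.map_smul, smul_eq_mul]
  -- put it together
  have key : (2 * Real.pi * Complex.I : ℂ)⁻¹ • (∮ z in C(0, 1), g z / z ^ 2)
      = (t - 1) * fderiv ℂ f x x := by
    rw [← hcoeff, ← hderiv_eq, hderiv]
  have hint : (∮ ξ in C(0, 1), f (mobius x (ξ • x)) / ξ ^ 2) = ∮ z in C(0, 1), g z / z ^ 2 := by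
    apply circleIntegral.integral_congr one_pos.le
    intro z hz
    simp only [Metric.mem_sphere] at hz
    have : ‖z‖ ≤ 1 := by rw [← dist_zero_right z]; exact le_of_eq hz
    rw [hg]
    simp only []
    rw [hmob z this]
  rw [hint]
  have h2pi : (2 * Real.pi * Complex.I : ℂ) ≠ 0 := by
    simp [Real.pi_ne_zero, Complex.I_ne_zero]
  rw [smul_eq_mul] at key
  have : (∮ z in C(0, 1), g z / z ^ 2) = (2 * Real.pi * Complex.I : ℂ) * ((t - 1) * fderiv ℂ f x x) := by
    field_simp at key
    linear_combination key
  rw [this]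
  have : ((1 - ‖x‖ ^ 2 : ℝ) : ℂ) = -(t - 1) := by push_cast [ht]; ring
  rw [this]
  field_simp
end

section
/- Let f: B_E → ℂ be analytic and x ∈ B_E with x ≠ 0. With s_x = √(1−‖x‖²), the gradient and invariant gradient satisfy the identity s_x²·∇f(x) + s_x·∇̃f(x) = (s_x − 1)·(⟨∇̃f(x), x̄⟩/‖x‖²)·x̄. -/
open scoped ComplexInnerProductSpace Classical

section aux
variable {E : Type*} [NormedAddCommGroup E] [InnerProductSpace ℂ E] [CompleteSpace E]

noncomputable def mobD (x : E) : E →L[ℂ] E :=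
  (-(Real.sqrt (1 - ‖x‖ ^ 2) : ℂ)) • ContinuousLinearMap.id ℂ E +
    ((((Real.sqrt (1 - ‖x‖ ^ 2) : ℂ)) - (Real.sqrt (1 - ‖x‖ ^ 2) : ℂ) ^ 2) / (‖x‖ ^ 2 : ℂ)) •
      ((innerSL ℂ x).smulRight x)

lemma mobD_apply (x y : E) :
    mobD x y = (-(Real.sqrt (1 - ‖x‖ ^ 2) : ℂ)) • y +
      ((((Real.sqrt (1 - ‖x‖ ^ 2) : ℂ)) - (Real.sqrt (1 - ‖x‖ ^ 2) : ℂ) ^ 2) / (‖x‖ ^ 2 : ℂ)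
        * ⟪x, y⟫) • x := by
  simp [mobD, smul_smul]

lemma mobius_zero_eq (x : E) (hx0 : x ≠ 0) : mobius x 0 = x := by
  have hn : ((‖x‖ : ℂ)) ^ 2 ≠ 0 := pow_ne_zero 2 (by exact_mod_cast norm_ne_zero_iff.mpr hx0)
  simp only [mobius, if_neg hx0, inner_zero_right, sub_zero, inv_one, one_smul]
  rw [inner_self_eq_norm_sq_to_K]
  norm_num
  rw [div_self hn]
  simp

lemma mobius_hasFDerivAt (x : E) (hx : ‖x‖ < 1) (hx0 : x ≠ 0) :
    HasFDerivAt (mobius x) (mobD x) 0 := by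
  have hsq : ((Real.sqrt (1 - ‖x‖ ^ 2) : ℝ) : ℂ) ^ 2 = 1 - (‖x‖ : ℂ) ^ 2 := by
    rw [← Complex.ofReal_pow, Real.sq_sqrt (by nlinarith [norm_nonneg x])]
    push_cast; ring
  have hcx : (‖x‖ : ℂ) ≠ 0 := by exact_mod_cast norm_ne_zero_iff.mpr hx0
  have hn : ((‖x‖ : ℂ)) ^ 2 ≠ 0 := pow_ne_zero 2 hcx
  have hinv : ((‖x‖ : ℂ))⁻¹ ^ 2 * ((‖x‖ : ℂ)) ^ 2 = 1 := by field_simp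
  have h1 : HasFDerivAt (fun z : E => (1 : ℂ) - ⟪x, z⟫) (-(innerSL ℂ x)) 0 :=
    (innerSL ℂ x).hasFDerivAt.const_sub 1
  have h2 : HasFDerivAt (fun z : E => ((1 : ℂ) - ⟪x, z⟫)⁻¹) (innerSL ℂ x) 0 := by
    have h0 : ((1:ℂ) - ⟪x, (0:E)⟫) = 1 := by simp
    have := (hasFDerivAt_inv (𝕜 := ℂ) (x := (1:ℂ) - ⟪x, (0:E)⟫) (by rw [h0]; norm_num)).comp
      (0 : E) h1
    have he : ((ContinuousLinearMap.toSpanSingleton ℂ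
        (-(((1:ℂ) - ⟪x, (0:E)⟫) ^ 2)⁻¹)).comp (-(innerSL ℂ x))) = innerSL ℂ x := by
      ext y; simp [h0]
    rw [he] at this
    simpa [Function.comp_def] using this
  have h3 : HasFDerivAt (fun z : E => x - z) (-(ContinuousLinearMap.id ℂ E)) 0 :=
    (hasFDerivAt_id (0 : E)).const_sub x
  have hm := h2.smul h3
  have hin : HasFDerivAt (fun z : E => ⟪x, ((1:ℂ) - ⟪x, z⟫)⁻¹ • (x - z)⟫)
      ((innerSL ℂ x).comp (((1:ℂ) - ⟪x, (0:E)⟫)⁻¹ • (-(ContinuousLinearMap.id ℂ E)) +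
        (innerSL ℂ x).smulRight (x - 0))) 0 := by
    have := (innerSL ℂ x).hasFDerivAt.comp (0 : E) hm
    simpa only [Function.comp_def, innerSL_apply_apply, Pi.smul_apply'] using this
  have hPm := hin.smul_const (((‖x‖ : ℂ) ^ 2)⁻¹ • x)
  have hfull := ((hm.sub hPm).const_smul ((Real.sqrt (1 - ‖x‖ ^ 2) : ℂ))).add hPm
  have hfun : (fun z : E => (Real.sqrt (1 - ‖x‖ ^ 2) : ℂ) •
        ((((1:ℂ) - ⟪x, z⟫)⁻¹ • (x - z)) - ⟪x, ((1:ℂ) - ⟪x, z⟫)⁻¹ • (x - z)⟫ • (((‖x‖ : ℂ) ^ 2)⁻¹ • x))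
        + ⟪x, ((1:ℂ) - ⟪x, z⟫)⁻¹ • (x - z)⟫ • (((‖x‖ : ℂ) ^ 2)⁻¹ • x)) = mobius x := by
    funext z
    simp only [mobius, if_neg hx0, div_eq_mul_inv, smul_smul]
  rw [← hfun]; refine HasFDerivAt.congr_fderiv hfull ?_; symm
  ext y
  have hxx : ⟪x, x⟫ = (‖x‖ ^ 2 : ℂ) := by
    rw [inner_self_eq_norm_sq_to_K]; norm_num
  simp only [mobD, ContinuousLinearMap.add_apply, ContinuousLinearMap.smul_apply,
    ContinuousLinearMap.id_apply, ContinuousLinearMap.coe_sub', Pi.sub_apply,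
    ContinuousLinearMap.smulRight_apply, ContinuousLinearMap.coe_comp', Function.comp_apply,
    ContinuousLinearMap.neg_apply, innerSL_apply_apply, inner_zero_right, sub_zero, inv_one,
    one_smul, ContinuousLinearMap.one_apply, inner_sub_right, inner_neg_right, inner_smul_right,
    smul_sub, smul_smul, hxx]
  match_scalars
  · ring
  · simp only [inner_add_right, inner_neg_right, inner_smul_right, hxx, hsq]
    linear_combination (Real.sqrt (1 - ‖x‖ ^ 2) : ℂ) * ⟪x, y⟫ * hinv
end aux

/-- The identity `s_x² ∇f(x) + s_x ∇̃f(x) = (s_x - 1)(⟨∇̃f(x), x̄⟩/‖x‖²) x̄` for analytic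
`f : B_E → ℂ` and `0 ≠ x ∈ B_E`, where `s_x = √(1-‖x‖²)`.

Here `conj` is the coordinatewise conjugation `z ↦ z̄` determined by the fixed orthonormal
basis of `E`: a conjugate-linear involution satisfying `⟪conj a, conj b⟫ = ⟪b, a⟫`.  The
paper's gradient `∇f(x)`, characterized by `f'(x)(y) = ⟨y, conj ∇f(x)⟩` (inner product
linear in the first variable), equals `conj (gradient f x)` for Mathlib's `gradient`, and
the invariant gradient is `∇̃f(x) = ∇(f∘φ_x)(0)`; the paper's inner product `⟨a, b⟩` is
Mathlib's `⟪b, a⟫`. -/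
theorem gradient_invariant_gradient_identity {E : Type*} [NormedAddCommGroup E]
    [InnerProductSpace ℂ E] [CompleteSpace E]
    (conj : E →ₗ⋆[ℂ] E) (hconj : ∀ z, conj (conj z) = z)
    (hinner : ∀ a b : E, ⟪conj a, conj b⟫ = ⟪b, a⟫)
    (f : E → ℂ) (hf : AnalyticOnNhd ℂ f (Metric.ball 0 1))
    (x : E) (hx : ‖x‖ < 1) (hx0 : x ≠ 0) :
    ((Real.sqrt (1 - ‖x‖ ^ 2) : ℂ) ^ 2) • conj (gradient f x) +
        (Real.sqrt (1 - ‖x‖ ^ 2) : ℂ) • conj (gradient (f ∘ mobius x) 0) =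
      (((Real.sqrt (1 - ‖x‖ ^ 2) : ℂ) - 1) *
          (⟪conj x, conj (gradient (f ∘ mobius x) 0)⟫ / (‖x‖ ^ 2 : ℂ))) •
        conj x := by
  have hcx : (‖x‖ : ℂ) ≠ 0 := by exact_mod_cast norm_ne_zero_iff.mpr hx0
  have hn : ((‖x‖ : ℂ)) ^ 2 ≠ 0 := pow_ne_zero 2 hcx
  set g := gradient f x with hg
  have hdf : DifferentiableAt ℂ f x :=
    (hf x (by simpa [Metric.mem_ball, dist_zero_right] using hx)).differentiableAt
  have hgrad : HasGradientAt f g x := hdf.hasFDerivAt.hasGradientAt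
  have hcomp : HasFDerivAt (f ∘ mobius x)
      ((InnerProductSpace.toDual ℂ E g).comp (mobD x)) 0 := by
    have hfd : HasFDerivAt f (InnerProductSpace.toDual ℂ E g) (mobius x 0) := by
      rw [mobius_zero_eq x hx0]; exact hgrad.hasFDerivAt
    exact hfd.comp 0 (mobius_hasFDerivAt x hx hx0)
  have hxx : ⟪x, x⟫ = ((‖x‖ : ℂ)) ^ 2 := by
    rw [inner_self_eq_norm_sq_to_K]; norm_num
  have hadj : (InnerProductSpace.toDual ℂ E g).comp (mobD x) =
      InnerProductSpace.toDual ℂ E (mobD x g) := by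
    ext y
    simp only [ContinuousLinearMap.coe_comp', Function.comp_apply,
      InnerProductSpace.toDual_apply_apply, mobD_apply, inner_add_left, inner_add_right,
      inner_smul_left, inner_smul_right, hxx, map_mul, map_div₀, map_sub, map_pow, map_neg,
      Complex.conj_ofReal, inner_conj_symm]
    ring
  have hkey : gradient (f ∘ mobius x) 0 = mobD x g := by
    refine HasGradientAt.gradient ?_
    rw [hasGradientAt_iff_hasFDerivAt, ← hadj]
    exact hcomp
  rw [hkey, mobD_apply]
  simp only [map_add, LinearMap.map_smulₛₗ, map_neg, map_mul, map_div₀, map_sub, map_pow,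
    Complex.conj_ofReal, inner_add_right, inner_smul_right, hinner, hxx, inner_conj_symm]
  match_scalars
  · ring
  · field_simp
    ring
end

section
/- For every natural number k ≥ 1, sup over 0 < λ < 1 of (1 − λ²)·k·λ^k / (1 − λ^{2k}) is at least (1 − 1/k)^{k/2}; in particular these suprema are bounded below by a positive constant independent of k. -/
private lemma denom_pos {k : ℕ} (hk : 1 ≤ k) {t : ℝ} (ht0 : 0 ≤ t) (ht1 : t < 1) :
    0 < 1 - t ^ (2 * k) := by
  have : t ^ (2 * k) < 1 := pow_lt_one₀ ht0 ht1 (by omega)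
  linarith

private lemma bdd (k : ℕ) (hk : 1 ≤ k) :
    BddAbove (Set.range fun t : Set.Ioo (0 : ℝ) 1 =>
      (1 - (t : ℝ) ^ 2) * k * (t : ℝ) ^ k / (1 - (t : ℝ) ^ (2 * k))) := by
  refine ⟨k, ?_⟩
  rintro x ⟨⟨t, ht0, ht1⟩, rfl⟩
  have hd : 0 < 1 - t ^ (2 * k) := denom_pos hk ht0.le ht1
  show (1 - t ^ 2) * k * t ^ k / (1 - t ^ (2 * k)) ≤ k
  rw [div_le_iff₀ hd]
  have h1 : t ^ (2 * k) ≤ t ^ 2 := pow_le_pow_of_le_one ht0.le ht1.le (by omega)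
  have h2 : t ^ k ≤ 1 := pow_le_one₀ ht0.le ht1.le
  have h3 : (0:ℝ) ≤ t ^ k := pow_nonneg ht0.le k
  have h4 : (0:ℝ) ≤ (k:ℝ) := Nat.cast_nonneg k
  have h5 : (0:ℝ) ≤ 1 - t ^ 2 := by nlinarith
  nlinarith [mul_nonneg (mul_nonneg h5 h4) (sub_nonneg.2 h2),
    mul_le_mul_of_nonneg_right (show 1 - t ^ 2 ≤ 1 - t ^ (2*k) by linarith) h4]

/-- For every `k ≥ 1`, `sup_{0<t<1} (1-t²)·k·t^k/(1-t^{2k}) ≥ (1-1/k)^{k/2}`; in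
particular these suprema are bounded below by a positive constant independent of `k`. -/
theorem sup_lower_bound :
    (∀ k : ℕ, 1 ≤ k →
        (1 - 1 / (k : ℝ)) ^ ((k : ℝ) / 2) ≤
          ⨆ t : Set.Ioo (0 : ℝ) 1,
            (1 - (t : ℝ) ^ 2) * k * (t : ℝ) ^ k / (1 - (t : ℝ) ^ (2 * k))) ∧
      ∃ c : ℝ, 0 < c ∧ ∀ k : ℕ, 1 ≤ k →
        c ≤ ⨆ t : Set.Ioo (0 : ℝ) 1,
              (1 - (t : ℝ) ^ 2) * k * (t : ℝ) ^ k / (1 - (t : ℝ) ^ (2 * k)) := by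
  constructor
  · intro k hk
    rcases eq_or_lt_of_le hk with h1 | h2
    · -- k = 1 : left side is 0
      subst h1
      have h0 : (1 - 1 / ((1:ℕ):ℝ)) ^ (((1:ℕ):ℝ) / 2) = 0 := by
        norm_num
      rw [h0]
      refine le_ciSup_of_le (bdd 1 le_rfl) ⟨1/2, by norm_num⟩ ?_
      show (0:ℝ) ≤ (1 - (1/2:ℝ) ^ 2) * ((1:ℕ):ℝ) * (1/2:ℝ) ^ (1:ℕ) / (1 - (1/2:ℝ) ^ (2*1))
      norm_num
    · -- k ≥ 2
      have hk1 : (1:ℝ) ≤ (k:ℝ) := by exact_mod_cast hk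
      have hk2 : (2:ℝ) ≤ (k:ℝ) := by exact_mod_cast h2
      have hkpos : (0:ℝ) < k := by linarith
      set x : ℝ := 1 - 1 / (k:ℝ) with hxdef
      have hx0 : 0 < x := by
        have : 1 / (k:ℝ) < 1 := by
          rw [div_lt_one hkpos]; linarith
        simp only [hxdef]; linarith
      have hx1 : x < 1 := by
        have : 0 < 1 / (k:ℝ) := by positivity
        simp only [hxdef]; linarith
      set a : ℝ := Real.sqrt x with hadef
      have ha0 : 0 < a := Real.sqrt_pos.2 hx0
      have has : a ^ 2 = x := Real.sq_sqrt hx0.le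
      have ha1 : a < 1 := by nlinarith
      have hval : x ^ ((k:ℝ) / 2) = a ^ k := by
        rw [hadef, Real.sqrt_eq_rpow, ← Real.rpow_natCast (x ^ ((1:ℝ)/2)) k,
          ← Real.rpow_mul hx0.le]
        congr 1
        ring
      rw [hval]
      have hd : 0 < 1 - a ^ (2 * k) := denom_pos hk ha0.le ha1
      have hd1 : 1 - a ^ (2 * k) ≤ 1 := by
        have : (0:ℝ) ≤ a ^ (2 * k) := pow_nonneg ha0.le _
        linarith
      refine le_ciSup_of_le (bdd k hk) ⟨a, ha0, ha1⟩ ?_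
      show a ^ k ≤ (1 - a ^ 2) * k * a ^ k / (1 - a ^ (2 * k))
      have hnum : (1 - a ^ 2) * k = 1 := by
        rw [has, hxdef]
        field_simp
        ring
      rw [le_div_iff₀ hd]
      have h3 : (0:ℝ) ≤ a ^ k := pow_nonneg ha0.le k
      nlinarith
  · refine ⟨1/2, by norm_num, ?_⟩
    intro k hk
    have hkpos : (0:ℝ) < k := by exact_mod_cast Nat.pos_of_ne_zero (by omega)
    set t : ℝ := (1/2 : ℝ) ^ ((1:ℝ) / k) with htdef
    have ht0 : 0 < t := Real.rpow_pos_of_pos (by norm_num) _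
    have ht1 : t < 1 := Real.rpow_lt_one (by norm_num) (by norm_num) (by positivity)
    have htk : t ^ k = 1/2 := by
      rw [htdef, ← Real.rpow_natCast ((1/2:ℝ) ^ ((1:ℝ)/k)) k, ← Real.rpow_mul (by norm_num)]
      rw [show (1:ℝ)/k * k = 1 by field_simp, Real.rpow_one]
    have ht2k : t ^ (2 * k) = 1/4 := by
      rw [mul_comm, pow_mul, htk]; norm_num
    have hB : 1 - t ^ (2 * k) ≤ (k:ℝ) * (1 - t ^ 2) := by
      have hber := one_add_mul_le_pow (a := t ^ 2 - 1) (by nlinarith) k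
      have h2 : (1 + (t ^ 2 - 1)) ^ k = t ^ (2 * k) := by
        rw [show (1 + (t ^ 2 - 1)) = t ^ 2 by ring, ← pow_mul]
      rw [h2] at hber
      nlinarith
    refine le_ciSup_of_le (bdd k hk) ⟨t, ht0, ht1⟩ ?_
    show (1/2:ℝ) ≤ (1 - t ^ 2) * k * t ^ k / (1 - t ^ (2 * k))
    rw [ht2k] at hB
    rw [htk, ht2k]
    have h34 : (3/4:ℝ) ≤ (k:ℝ) * (1 - t ^ 2) := by linarith
    rw [le_div_iff₀ (by norm_num : (0:ℝ) < 1 - 1/4)]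
    nlinarith
end
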